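/- arXiv:1304.0673 — 6 statements merged into one kernel-verified Lean document; each statement's English description precedes it below -/
import Mathlib

section
/- For the Richardson extrapolation table defined by T_{j,1} = (y(jh) - y(-jh))/(2jh) and T_{j,k+1} = T_{j,k} + (T_{j,k} - T_{j-1,k})/((1-k/j)^2 - 1), the entries satisfy the closed-form expression T_{j,k} = \sum_{i=1}^k \frac{2(-1)^{i+1} (j)_k^2}{(i-1)!\,(k-i)!\,(2j-k+i)_k\,(j-k+i)} T_{j-k+i,1}, where (n)_k = n!/(n-k)! denotes the falling factorial. -/
noncomputable def rcf (j k i : ℕ) : ℝ :=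
  (2 * (-1 : ℝ) ^ (i + 1) * ((j.descFactorial k : ℝ)) ^ 2) /
    ((((i - 1).factorial : ℝ)) * ((k - i).factorial) *
      (((2 * j - k + i).descFactorial k : ℝ)) * ((j - k + i : ℕ) : ℝ))

noncomputable def rbc (j k : ℕ) : ℝ := (j : ℝ) ^ 2 / ((k : ℝ) * (2 * (j : ℝ) - (k : ℝ)))

lemma desc_succ (n k : ℕ) (hn : 1 ≤ n) :
    n.descFactorial (k + 1) = n * (n - 1).descFactorial k := by
  obtain ⟨p, rfl⟩ := Nat.exists_eq_add_of_le hn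
  rw [Nat.add_comm 1 p, Nat.succ_descFactorial_succ, Nat.add_sub_cancel]

lemma desc_ne (n k : ℕ) (h : k ≤ n) : ((n.descFactorial k : ℕ) : ℝ) ≠ 0 := by
  have : n.descFactorial k ≠ 0 := by
    intro h0
    exact absurd (Nat.descFactorial_eq_zero_iff_lt.mp h0) (by omega)
  exact_mod_cast this

lemma desc_real (n k : ℕ) (h : k < n) :
    ((n.descFactorial k : ℕ) : ℝ)
      = (n : ℝ) * (((n - 1).descFactorial k : ℕ) : ℝ) / ((n - k : ℕ) : ℝ) := by
  have key : (n - k) * n.descFactorial k = n * (n - 1).descFactorial k := by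
    rw [← Nat.descFactorial_succ, desc_succ n k (by omega)]
  rw [eq_div_iff (by exact_mod_cast (by omega : n - k ≠ 0))]
  exact_mod_cast show n.descFactorial k * (n - k) = n * (n - 1).descFactorial k by
    rw [mul_comm]; exact key

set_option maxHeartbeats 2000000 in
lemma rcf_one (b m : ℕ) :
    rcf (b + m + 2) (b + 1 + 1) 1 = rbc (b + m + 2) (b + 1) * rcf (b + m + 1) (b + 1) 1 := by
  simp only [rcf, rbc]
  rw [show (1:ℕ) - 1 = 0 by omega]
  rw [show b + 1 + 1 - 1 = b + 1 by omega]
  rw [show b + 1 - 1 = b by omega]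
  rw [show 2 * (b + m + 2) - (b + 1 + 1) + 1 = b + 2 * m + 3 by omega]
  rw [show 2 * (b + m + 1) - (b + 1) + 1 = b + 2 * m + 2 by omega]
  rw [show b + m + 2 - (b + 1 + 1) + 1 = m + 1 by omega]
  rw [show b + m + 1 - (b + 1) + 1 = m + 1 by omega]
  rw [desc_succ (b + m + 2) (b + 1) (by omega), show b + m + 2 - 1 = b + m + 1 by omega]
  rw [desc_succ (b + 2 * m + 3) (b + 1) (by omega),
    show b + 2 * m + 3 - 1 = b + 2 * m + 2 by omega]
  rw [show (2 * ((b + m + 2 : ℕ) : ℝ) - ((b + 1 : ℕ) : ℝ)) = ((b + 2 * m + 3 : ℕ) : ℝ) by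
    push_cast; ring]
  rw [show ((b + 1 : ℕ)).factorial = (b + 1) * b.factorial from Nat.factorial_succ b]
  have hP := desc_ne (b + m + 1) (b + 1) (by omega)
  have hQ := desc_ne (b + 2 * m + 2) (b + 1) (by omega)
  have hB : (b.factorial : ℝ) ≠ 0 := by exact_mod_cast b.factorial_pos.ne'
  set Pn : ℕ := (b + m + 1).descFactorial (b + 1) with hPn
  set Qn : ℕ := (b + 2 * m + 2).descFactorial (b + 1) with hQn
  clear_value Pn Qn
  push_cast
  have h1 : ((b:ℝ) + 1) ≠ 0 := by positivity
  have h2 : ((b:ℝ) + 2 * m + 3) ≠ 0 := by positivity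
  have h3 : ((m:ℝ) + 1) ≠ 0 := by positivity
  field_simp

set_option maxHeartbeats 2000000 in
lemma rcf_top (b m : ℕ) :
    rcf (b + m + 2) (b + 1 + 1) (b + 1 + 1)
      = (1 - rbc (b + m + 2) (b + 1)) * rcf (b + m + 2) (b + 1) (b + 1) := by
  simp only [rcf, rbc]
  rw [show b + 1 + 1 - 1 = b + 1 by omega]
  rw [show b + 1 + 1 - (b + 1 + 1) = 0 by omega]
  rw [show b + 1 - 1 = b by omega]
  rw [show b + 1 - (b + 1) = 0 by omega]
  rw [show 2 * (b + m + 2) - (b + 1 + 1) + (b + 1 + 1) = 2 * b + 2 * m + 4 by omega]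
  rw [show 2 * (b + m + 2) - (b + 1) + (b + 1) = 2 * b + 2 * m + 4 by omega]
  rw [show b + m + 2 - (b + 1 + 1) + (b + 1 + 1) = b + m + 2 by omega]
  rw [show b + m + 2 - (b + 1) + (b + 1) = b + m + 2 by omega]
  rw [desc_succ (b + m + 2) (b + 1) (by omega), show b + m + 2 - 1 = b + m + 1 by omega]
  rw [desc_succ (2 * b + 2 * m + 4) (b + 1) (by omega),
    show 2 * b + 2 * m + 4 - 1 = 2 * b + 2 * m + 3 by omega]
  rw [desc_real (b + m + 2) (b + 1) (by omega), show b + m + 2 - 1 = b + m + 1 by omega,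
    show b + m + 2 - (b + 1) = m + 1 by omega]
  rw [desc_real (2 * b + 2 * m + 4) (b + 1) (by omega),
    show 2 * b + 2 * m + 4 - 1 = 2 * b + 2 * m + 3 by omega,
    show 2 * b + 2 * m + 4 - (b + 1) = b + 2 * m + 3 by omega]
  rw [show (2 * ((b + m + 2 : ℕ) : ℝ) - ((b + 1 : ℕ) : ℝ)) = ((b + 2 * m + 3 : ℕ) : ℝ) by
    push_cast; ring]
  rw [show ((b + 1 : ℕ)).factorial = (b + 1) * b.factorial from Nat.factorial_succ b]
  have hP := desc_ne (b + m + 1) (b + 1) (by omega)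
  have hQ := desc_ne (2 * b + 2 * m + 3) (b + 1) (by omega)
  have hB : (b.factorial : ℝ) ≠ 0 := by exact_mod_cast b.factorial_pos.ne'
  set Pn : ℕ := (b + m + 1).descFactorial (b + 1) with hPn
  set Qn : ℕ := (2 * b + 2 * m + 3).descFactorial (b + 1) with hQn
  clear_value Pn Qn
  push_cast
  have h1 : ((b:ℝ) + 1) ≠ 0 := by positivity
  have h2 : ((b:ℝ) + 2 * m + 3) ≠ 0 := by positivity
  have h3 : ((m:ℝ) + 1) ≠ 0 := by positivity
  have h4 : ((b:ℝ) + m + 2) ≠ 0 := by positivity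
  have h5 : (2 * (b:ℝ) + 2 * m + 4) ≠ 0 := by positivity
  field_simp
  ring

set_option maxHeartbeats 2000000 in
lemma rcf_mid (a b m : ℕ) :
    rcf (a + b + m + 3) (a + b + 2 + 1) (a + 2)
      = (1 - rbc (a + b + m + 3) (a + b + 2)) * rcf (a + b + m + 3) (a + b + 2) (a + 1)
        + rbc (a + b + m + 3) (a + b + 2) * rcf (a + b + m + 2) (a + b + 2) (a + 2) := by
  simp only [rcf, rbc]
  rw [show a + 2 - 1 = a + 1 by omega]
  rw [show a + 1 - 1 = a by omega]
  rw [show a + b + 2 + 1 - (a + 2) = b + 1 by omega]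
  rw [show a + b + 2 - (a + 1) = b + 1 by omega]
  rw [show a + b + 2 - (a + 2) = b by omega]
  rw [show 2 * (a + b + m + 3) - (a + b + 2 + 1) + (a + 2) = 2 * a + b + 2 * m + 5 by omega]
  rw [show 2 * (a + b + m + 3) - (a + b + 2) + (a + 1) = 2 * a + b + 2 * m + 5 by omega]
  rw [show 2 * (a + b + m + 2) - (a + b + 2) + (a + 2) = 2 * a + b + 2 * m + 4 by omega]
  rw [show a + b + m + 3 - (a + b + 2 + 1) + (a + 2) = a + m + 2 by omega]
  rw [show a + b + m + 3 - (a + b + 2) + (a + 1) = a + m + 2 by omega]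
  rw [show a + b + m + 2 - (a + b + 2) + (a + 2) = a + m + 2 by omega]
  rw [desc_succ (a + b + m + 3) (a + b + 2) (by omega),
    show a + b + m + 3 - 1 = a + b + m + 2 by omega]
  rw [desc_succ (2 * a + b + 2 * m + 5) (a + b + 2) (by omega),
    show 2 * a + b + 2 * m + 5 - 1 = 2 * a + b + 2 * m + 4 by omega]
  rw [desc_real (a + b + m + 3) (a + b + 2) (by omega),
    show a + b + m + 3 - 1 = a + b + m + 2 by omega,
    show a + b + m + 3 - (a + b + 2) = m + 1 by omega]
  rw [desc_real (2 * a + b + 2 * m + 5) (a + b + 2) (by omega),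
    show 2 * a + b + 2 * m + 5 - 1 = 2 * a + b + 2 * m + 4 by omega,
    show 2 * a + b + 2 * m + 5 - (a + b + 2) = a + 2 * m + 3 by omega]
  rw [show (2 * ((a + b + m + 3 : ℕ) : ℝ) - ((a + b + 2 : ℕ) : ℝ))
      = ((a + b + 2 * m + 4 : ℕ) : ℝ) by push_cast; ring]
  rw [show ((a + 1 : ℕ)).factorial = (a + 1) * a.factorial from Nat.factorial_succ a]
  rw [show ((b + 1 : ℕ)).factorial = (b + 1) * b.factorial from Nat.factorial_succ b]
  have hP := desc_ne (a + b + m + 2) (a + b + 2) (by omega)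
  have hQ := desc_ne (2 * a + b + 2 * m + 4) (a + b + 2) (by omega)
  set Pn : ℕ := (a + b + m + 2).descFactorial (a + b + 2) with hPn
  set Qn : ℕ := (2 * a + b + 2 * m + 4).descFactorial (a + b + 2) with hQn
  clear_value Pn Qn
  have hA : (a.factorial : ℝ) ≠ 0 := by exact_mod_cast a.factorial_pos.ne'
  have hB : (b.factorial : ℝ) ≠ 0 := by exact_mod_cast b.factorial_pos.ne'
  push_cast
  have h1 : ((a:ℝ) + 1) ≠ 0 := by positivity
  have h2 : ((b:ℝ) + 1) ≠ 0 := by positivity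
  have h3 : ((m:ℝ) + 1) ≠ 0 := by positivity
  have h4 : ((a:ℝ) + m + 2) ≠ 0 := by positivity
  have h5 : (2 * (a:ℝ) + b + 2 * m + 5) ≠ 0 := by positivity
  have h6 : ((a:ℝ) + 2 * m + 3) ≠ 0 := by positivity
  have h7 : ((a:ℝ) + b + 2) ≠ 0 := by positivity
  have h8 : ((a:ℝ) + b + 2 * m + 4) ≠ 0 := by positivity
  field_simp
  ring

/-- Closed-form expression for the entries of the Richardson extrapolation table
built from central differences. `(n)_k` is the falling factorial `Nat.descFactorial`. -/
theorem richardson_closed_form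
    (y : ℝ → ℝ) (h : ℝ) (hh : 0 < h) (T : ℕ → ℕ → ℝ)
    (hT1 : ∀ j : ℕ, 1 ≤ j → T j 1 = (y (j * h) - y (-(j * h))) / (2 * j * h))
    (hTrec : ∀ j k : ℕ, 1 ≤ k → k ≤ j - 1 →
      T j (k + 1) = T j k + (T j k - T (j - 1) k) / ((1 - (k : ℝ) / j) ^ 2 - 1)) :
    ∀ j k : ℕ, 1 ≤ k → k ≤ j →
      T j k = ∑ i ∈ Finset.Icc 1 k,
        (2 * (-1 : ℝ) ^ (i + 1) * ((j.descFactorial k : ℝ)) ^ 2) /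
          ((((i - 1).factorial : ℝ)) * ((k - i).factorial) *
            (((2 * j - k + i).descFactorial k : ℝ)) * ((j - k + i : ℕ) : ℝ)) *
          T (j - k + i) 1 := by
  have main : ∀ k, 1 ≤ k → ∀ j, k ≤ j →
      T j k = ∑ i ∈ Finset.Icc 1 k, rcf j k i * T (j - k + i) 1 := by
    intro k hk
    induction k, hk using Nat.le_induction with
    | base =>
      intro j hj
      rw [Finset.Icc_self, Finset.sum_singleton, show j - 1 + 1 = j by omega]
      have hc : rcf j 1 1 = 1 := by
        simp only [rcf]
        rw [show (1:ℕ) - 1 = 0 by omega, show 2 * j - 1 + 1 = 2 * j by omega,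
          show j - 1 + 1 = j by omega, Nat.descFactorial_one, Nat.descFactorial_one]
        have hj0 : ((j:ℕ):ℝ) ≠ 0 := by exact_mod_cast (by omega : j ≠ 0)
        push_cast
        simp [Nat.factorial]
        field_simp
      rw [hc, one_mul]
    | succ k hk IH =>
      intro j hj
      have hjR : (k:ℝ) < (j:ℝ) := by exact_mod_cast (by omega : k < j)
      have hk0 : (0:ℝ) < (k:ℝ) := by exact_mod_cast hk
      have hj0 : (j:ℝ) ≠ 0 := (hk0.trans hjR).ne'
      have h2jk : 2 * (j:ℝ) - (k:ℝ) ≠ 0 := by nlinarith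
      have step1 : T j (k + 1) = (1 - rbc j k) * T j k + rbc j k * T (j - 1) k := by
        rw [hTrec j k hk (by omega)]
        have hD : (1 - (k:ℝ)/j)^2 - 1 = -((k:ℝ) * (2 * (j:ℝ) - k))/(j:ℝ)^2 := by
          field_simp; ring
        rw [hD]
        simp only [rbc]
        field_simp
        ring
      rw [step1, IH j (by omega), IH (j - 1) (by omega)]
      have hidx : ∀ i ∈ Finset.Icc 1 k,
          rcf (j - 1) k i * T (j - 1 - k + i) 1 = rcf (j - 1) k i * T (j - (k + 1) + i) 1 := by
        intro i hi
        rw [show j - 1 - k + i = j - (k + 1) + i by omega]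
      rw [Finset.sum_congr rfl hidx, Finset.mul_sum, Finset.mul_sum]
      have hshiftF : (∑ i ∈ Finset.Icc 1 k, (1 - rbc j k) * (rcf j k i * T (j - k + i) 1))
          = ∑ i ∈ Finset.Icc 2 (k + 1),
              (1 - rbc j k) * (rcf j k (i - 1) * T (j - (k + 1) + i) 1) := by
        have hmap : Finset.Icc 2 (k + 1) = (Finset.Icc 1 k).map (addRightEmbedding 1) := by
          rw [Finset.map_add_right_Icc]
        rw [hmap, Finset.sum_map]
        apply Finset.sum_congr rfl
        intro i hi
        simp only [Finset.mem_Icc] at hi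
        simp only [addRightEmbedding_apply]
        rw [show i + 1 - 1 = i by omega, show j - (k + 1) + (i + 1) = j - k + i by omega]
      rw [hshiftF]
      have hIcc1 : Finset.Icc 1 (k + 1) = insert 1 (Finset.Icc 2 (k + 1)) := by
        ext x; simp [Finset.mem_Icc]; omega
      have hIcc2 : Finset.Icc 2 (k + 1) = insert (k + 1) (Finset.Icc 2 k) := by
        ext x; simp [Finset.mem_Icc]; omega
      have hIcc3 : Finset.Icc 1 k = insert 1 (Finset.Icc 2 k) := by
        ext x; simp [Finset.mem_Icc]; omega
      have hn1 : (1:ℕ) ∉ Finset.Icc 2 (k + 1) := by simp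
      have hn2 : k + 1 ∉ Finset.Icc 2 k := by simp
      have hn3 : (1:ℕ) ∉ Finset.Icc 2 k := by simp
      rw [hIcc1, Finset.sum_insert hn1, hIcc2, Finset.sum_insert hn2,
        Finset.sum_insert hn2, hIcc3, Finset.sum_insert hn3]
      have e1 : rcf j (k + 1) 1 = rbc j k * rcf (j - 1) k 1 := by
        have E := rcf_one (k - 1) (j - k - 1)
        rw [show k - 1 + (j - k - 1) + 2 = j by omega,
          show k - 1 + 1 + 1 = k + 1 by omega,
          show k - 1 + 1 = k by omega,
          show k - 1 + (j - k - 1) + 1 = j - 1 by omega] at E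
        exact E
      have e2 : rcf j (k + 1) (k + 1) = (1 - rbc j k) * rcf j k (k + 1 - 1) := by
        rw [show k + 1 - 1 = k by omega]
        have E := rcf_top (k - 1) (j - k - 1)
        rw [show k - 1 + (j - k - 1) + 2 = j by omega,
          show k - 1 + 1 + 1 = k + 1 by omega,
          show k - 1 + 1 = k by omega] at E
        exact E
      have e3 : ∑ i ∈ Finset.Icc 2 k, rcf j (k + 1) i * T (j - (k + 1) + i) 1
          = (∑ i ∈ Finset.Icc 2 k, (1 - rbc j k) * (rcf j k (i - 1) * T (j - (k + 1) + i) 1))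
            + ∑ i ∈ Finset.Icc 2 k, rbc j k * (rcf (j - 1) k i * T (j - (k + 1) + i) 1) := by
        rw [← Finset.sum_add_distrib]
        apply Finset.sum_congr rfl
        intro i hi
        simp only [Finset.mem_Icc] at hi
        have E := rcf_mid (i - 2) (k - i) (j - k - 1)
        rw [show i - 2 + (k - i) + (j - k - 1) + 3 = j by omega,
          show i - 2 + (k - i) + 2 + 1 = k + 1 by omega,
          show i - 2 + (k - i) + 2 = k by omega,
          show i - 2 + 2 = i by omega,
          show i - 2 + 1 = i - 1 by omega,
          show i - 2 + (k - i) + (j - k - 1) + 2 = j - 1 by omega] at E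
        rw [E]
        ring
      linear_combination (-(T (j - (k + 1) + 1) 1)) * e1 - (T (j - (k + 1) + (k + 1)) 1) * e2 - e3
  intro j k hk hjk
  simpa only [rcf] using main k hk j hjk
end

section
/- The diagonal entries of the Richardson extrapolation table equal the symmetric central-difference approximation using 2m points: T_{m,m} = \sum_{j=1}^m \frac{(-1)^{j+1} (m!)^2}{j h (m-j)! (m+j)!} (y(jh) - y(-jh)). -/
open Finset


lemma fact_ratio : ∀ b a : ℕ, a ≤ b → a.factorial * ∏ t ∈ Icc (a+1) b, t = b.factorial := by
  intro b
  induction b with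
  | zero => intro a ha; interval_cases a; simp
  | succ b ih =>
    intro a ha
    rcases Nat.eq_or_lt_of_le ha with rfl | hlt
    · simp
    · have hab : a ≤ b := by omega
      rw [← Finset.Ico_add_one_right_eq_Icc, Finset.prod_Ico_succ_top (by omega), Finset.Ico_add_one_right_eq_Icc,
        ← mul_assoc, ih a hab, Nat.factorial_succ, mul_comm]

lemma prod_Icc_id (n : ℕ) : (∏ l ∈ Icc 1 n, l) = n.factorial := by
  rw [← Finset.Ico_add_one_right_eq_Icc, prod_Ico_id_eq_factorial]

lemma prod_reflect (n : ℕ) : (∏ l ∈ Icc 1 n, (n + 1 - l)) = n.factorial := by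
  rw [← prod_Icc_id n]
  refine Finset.prod_nbij' (fun l => n + 1 - l) (fun l => n + 1 - l) ?_ ?_ ?_ ?_
    (fun a _ => rfl) <;>
    · intro a ha
      simp only [mem_Icc] at *
      omega

lemma prod_sub_cast (n : ℕ) :
    (∏ l ∈ Icc 1 n, ((l : ℝ) - (n + 1))) = (-1) ^ n * n.factorial := by
  have : ∀ l ∈ Icc 1 n, ((l : ℝ) - (n + 1)) = -1 * ((n + 1 - l : ℕ) : ℝ) := by
    intro l hl
    simp only [mem_Icc] at hl
    push_cast [Nat.cast_sub (by omega : l ≤ n + 1)]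
    ring
  rw [Finset.prod_congr rfl this, Finset.prod_mul_distrib, Finset.prod_const, Nat.card_Icc]
  rw [← Nat.cast_prod, prod_reflect]
  simp

lemma prod_add_eq (n : ℕ) :
    (n+1).factorial * (∏ l ∈ Icc 1 n, (l + (n + 1))) = (2*n+1).factorial := by
  have hmap : (Icc 1 n).map (addRightEmbedding (n+1)) = Icc (n+2) (2*n+1) := by
    rw [Finset.map_add_right_Icc]; congr 1 <;> omega
  have := Finset.prod_map (Icc 1 n) (addRightEmbedding (n+1)) (fun t => t)
  rw [hmap] at this
  simp only [addRightEmbedding_apply] at this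
  rw [← this]
  exact fact_ratio (2*n+1) (n+1) (by omega)

lemma ne_sq (l i : ℕ) (hne : l ≠ i) : (l : ℝ)^2 - (i : ℝ)^2 ≠ 0 := by
  have : (l:ℝ) ≠ i := by exact_mod_cast hne
  have h0 : (0:ℝ) ≤ l := Nat.cast_nonneg l
  have h1 : (0:ℝ) ≤ i := Nat.cast_nonneg i
  intro hc
  apply this
  nlinarith [sq_nonneg ((l:ℝ) - i), sq_nonneg ((l:ℝ) + i)]

-- base case: m = i
lemma base_prod (n : ℕ) :
    ((2*(n+1)).factorial : ℝ) * ∏ l ∈ Icc 1 n, ((l:ℝ)^2 / ((l:ℝ)^2 - ((n+1):ℝ)^2))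
      = 2 * (-1)^n * ((n+1).factorial : ℝ)^2 := by
  have hsplit : ∀ l ∈ Icc 1 n, ((l:ℝ)^2 / ((l:ℝ)^2 - ((n+1):ℝ)^2))
      = (l:ℝ)^2 / (((l:ℝ) - (n+1)) * ((l:ℝ) + (n+1))) := by
    intro l hl; congr 1; ring
  rw [Finset.prod_congr rfl hsplit, Finset.prod_div_distrib, Finset.prod_mul_distrib,
    Finset.prod_pow, prod_sub_cast]
  have h1 : (∏ l ∈ Icc 1 n, (l:ℝ)) = (n.factorial : ℝ) := by
    rw [← Nat.cast_prod, prod_Icc_id]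
  have h2 : (∏ l ∈ Icc 1 n, ((l:ℝ) + (n+1))) = ((2*n+1).factorial : ℝ) / ((n+1).factorial : ℝ) := by
    have := prod_add_eq n
    have h3 : (∏ l ∈ Icc 1 n, ((l:ℝ) + (n+1))) = ((∏ l ∈ Icc 1 n, (l + (n+1)) : ℕ) : ℝ) := by
      push_cast; rfl
    rw [h3, eq_div_iff (by positivity)]
    exact_mod_cast (mul_comm _ _).trans this
  rw [h1, h2]
  have e1 : ((2*(n+1)).factorial : ℝ) = (2*n+2) * (2*n+1).factorial := by
    have : 2*(n+1) = (2*n+1) + 1 := by ring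
    rw [this]; push_cast [Nat.factorial_succ]; ring
  have e2 : ((n+1).factorial : ℝ) = (n+1) * n.factorial := by
    push_cast [Nat.factorial_succ]; ring
  have hf1 : ((2*n+1).factorial : ℝ) ≠ 0 := by positivity
  have hf2 : (n.factorial : ℝ) ≠ 0 := by positivity
  have hs : ((-1:ℝ))^n ≠ 0 := by
    intro hc; simpa using congrArg (|·|) hc
  rw [e1, e2]
  have hsq : ((-1:ℝ))^(n*2) = 1 := by rw [mul_comm, pow_mul]; norm_num
  field_simp
  ring_nf
  simp [hsq]

lemma coeff_eq (i : ℕ) (h1 : 1 ≤ i) : ∀ m, i ≤ m →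
    (∏ l ∈ (Icc 1 m).erase i, ((l:ℝ)^2 / ((l:ℝ)^2 - (i:ℝ)^2)))
      = 2 * (-1)^(i+1) * ((m.factorial:ℝ))^2 / (((m-i).factorial:ℝ) * ((m+i).factorial:ℝ)) := by
  refine Nat.le_induction ?_ ?_
  · -- m = i
    obtain ⟨n, rfl⟩ : ∃ n, i = n + 1 := ⟨i - 1, by omega⟩
    have he : (Icc 1 (n+1)).erase (n+1) = Icc 1 n := by
      rw [Finset.Icc_erase_right, Finset.Ico_add_one_right_eq_Icc]
    rw [he]
    have hb := base_prod n
    have hf : ((2*(n+1)).factorial : ℝ) ≠ 0 := by positivity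
    have h2 : (n+1) - (n+1) = 0 := by omega
    rw [h2]
    have h3 : (n+1) + (n+1) = 2*(n+1) := by ring
    rw [h3]
    simp only [Nat.factorial_zero, Nat.cast_one, one_mul]
    push_cast
    rw [eq_div_iff hf]
    rw [mul_comm] at hb
    rw [hb]
    have : ((-1:ℝ))^(n+1+1) = (-1)^n := by
      rw [pow_succ, pow_succ]; ring
    rw [this]
  · -- step
    intro m hm ih
    have hne : i ≠ m + 1 := by omega
    have he : (Icc 1 (m+1)).erase i = insert (m+1) ((Icc 1 m).erase i) := by
      ext x
      simp only [Finset.mem_erase, Finset.mem_insert, Finset.mem_Icc]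
      omega
    rw [he, Finset.prod_insert (by simp only [Finset.mem_erase, Finset.mem_Icc]; omega), ih]
    have c1 : ((m+1-i : ℕ) : ℝ) = (m:ℝ) + 1 - i := by
      push_cast [Nat.cast_sub (by omega : i ≤ m + 1)]; ring
    have e1 : ((m+1-i).factorial : ℝ) = ((m:ℝ)+1-i) * ((m-i).factorial : ℝ) := by
      have : m+1-i = (m-i)+1 := by omega
      rw [this, Nat.factorial_succ]
      push_cast
      rw [Nat.cast_sub (by omega : i ≤ m)]
      ring
    have e2 : ((m+1+i).factorial : ℝ) = ((m:ℝ)+1+i) * ((m+i).factorial : ℝ) := by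
      have : m+1+i = (m+i)+1 := by omega
      rw [this, Nat.factorial_succ]; push_cast; ring
    have e3 : ((m+1).factorial : ℝ) = ((m:ℝ)+1) * (m.factorial : ℝ) := by
      rw [Nat.factorial_succ]; push_cast; ring
    rw [e1, e2, e3]
    have hz1 : ((m:ℝ)+1)^2 - (i:ℝ)^2 ≠ 0 := by
      have := ne_sq (m+1) i (by omega)
      push_cast at this; convert this using 2 <;> push_cast <;> ring
    have hz2 : ((m-i).factorial : ℝ) ≠ 0 := by positivity
    have hz3 : ((m+i).factorial : ℝ) ≠ 0 := by positivity
    have hz4 : ((m:ℝ)+1-i) ≠ 0 := by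
      have : (i:ℝ) ≤ m := Nat.cast_le.mpr hm
      intro hc; linarith
    have hz5 : ((m:ℝ)+1+i) ≠ 0 := by positivity
    have key : ((m:ℝ)+1-i) * ((m:ℝ)+1+i) = ((m:ℝ)+1)^2 - (i:ℝ)^2 := by ring
    push_cast
    field_simp
    ring

lemma sum_step (a j : ℕ) (ha1 : 1 ≤ a) (haj : a < j) (q : ℝ) (hq0 : q ≠ 0)
    (f : ℕ → ℕ → ℝ) (δ : ℕ → ℝ)
    (E1 : q * f a j = -1)
    (E2 : q * f j a = q + 1)
    (E3 : ∀ i, a + 1 ≤ i → i ≤ j - 1 → q * (f i a * f i j) = (q + 1) * f i j - f i a) :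
    ∑ i ∈ Icc a j, (∏ l ∈ (Icc a j).erase i, f i l) * δ i
      = (∑ i ∈ Icc (a+1) j, (∏ l ∈ (Icc (a+1) j).erase i, f i l) * δ i)
        + ((∑ i ∈ Icc (a+1) j, (∏ l ∈ (Icc (a+1) j).erase i, f i l) * δ i)
           - ∑ i ∈ Icc a (j-1), (∏ l ∈ (Icc a (j-1)).erase i, f i l) * δ i) / q := by
  have hjI : j ∉ Icc (a+1) (j-1) := by simp only [Finset.mem_insert, mem_Icc]; omega
  have haI : a ∉ Icc (a+1) (j-1) := by simp only [Finset.mem_insert, mem_Icc]; omega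
  have haI' : a ∉ insert j (Icc (a+1) (j-1)) := by simp only [Finset.mem_insert, mem_Icc]; omega
  have hd : Icc a j = insert a (insert j (Icc (a+1) (j-1))) := by
    ext x; simp only [Finset.mem_insert, mem_Icc]; omega
  have hd2 : Icc (a+1) j = insert j (Icc (a+1) (j-1)) := by
    ext x; simp only [Finset.mem_insert, mem_Icc]; omega
  have hd3 : Icc a (j-1) = insert a (Icc (a+1) (j-1)) := by
    ext x; simp only [Finset.mem_insert, mem_Icc]; omega
  -- flatten S
  have hS : ∑ i ∈ Icc a j, (∏ l ∈ (Icc a j).erase i, f i l) * δ i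
      = (f a j * ∏ l ∈ Icc (a+1) (j-1), f a l) * δ a
        + (f j a * ∏ l ∈ Icc (a+1) (j-1), f j l) * δ j
        + ∑ i ∈ Icc (a+1) (j-1),
            (f i a * (f i j * ∏ l ∈ (Icc (a+1) (j-1)).erase i, f i l)) * δ i := by
    rw [hd, Finset.sum_insert haI', Finset.sum_insert hjI]
    rw [Finset.erase_insert haI', Finset.prod_insert hjI]
    have h2 : (insert a (insert j (Icc (a+1) (j-1)))).erase j
        = insert a (Icc (a+1) (j-1)) := by
      rw [Finset.erase_insert_of_ne (by omega), Finset.erase_insert hjI]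
    rw [h2, Finset.prod_insert haI, add_assoc]
    congr 2
    refine Finset.sum_congr rfl fun i hi => ?_
    simp only [mem_Icc] at hi
    have h3 : (insert a (insert j (Icc (a+1) (j-1)))).erase i
        = insert a (insert j ((Icc (a+1) (j-1)).erase i)) := by
      ext x
      simp only [Finset.mem_erase, Finset.mem_insert, mem_Icc]
      omega
    rw [h3, Finset.prod_insert (by simp only [Finset.mem_insert, Finset.mem_erase, mem_Icc]; omega),
      Finset.prod_insert (by simp only [Finset.mem_insert, Finset.mem_erase, mem_Icc]; omega)]
  have hA : ∑ i ∈ Icc (a+1) j, (∏ l ∈ (Icc (a+1) j).erase i, f i l) * δ i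
      = (∏ l ∈ Icc (a+1) (j-1), f j l) * δ j
        + ∑ i ∈ Icc (a+1) (j-1),
            (f i j * ∏ l ∈ (Icc (a+1) (j-1)).erase i, f i l) * δ i := by
    rw [hd2, Finset.sum_insert hjI, Finset.erase_insert hjI]
    congr 1
    refine Finset.sum_congr rfl fun i hi => ?_
    simp only [mem_Icc] at hi
    rw [Finset.erase_insert_of_ne (by omega),
      Finset.prod_insert (by simp only [Finset.mem_insert, Finset.mem_erase, mem_Icc]; omega)]
  have hB : ∑ i ∈ Icc a (j-1), (∏ l ∈ (Icc a (j-1)).erase i, f i l) * δ i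
      = (∏ l ∈ Icc (a+1) (j-1), f a l) * δ a
        + ∑ i ∈ Icc (a+1) (j-1),
            (f i a * ∏ l ∈ (Icc (a+1) (j-1)).erase i, f i l) * δ i := by
    rw [hd3, Finset.sum_insert haI, Finset.erase_insert haI]
    congr 1
    refine Finset.sum_congr rfl fun i hi => ?_
    simp only [mem_Icc] at hi
    rw [Finset.erase_insert_of_ne (by omega),
      Finset.prod_insert (by simp only [Finset.mem_insert, Finset.mem_erase, mem_Icc]; omega)]
  rw [hS, hA, hB]
  have hsum : q * ∑ i ∈ Icc (a+1) (j-1),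
        (f i a * (f i j * ∏ l ∈ (Icc (a+1) (j-1)).erase i, f i l)) * δ i
      = (q+1) * (∑ i ∈ Icc (a+1) (j-1),
            (f i j * ∏ l ∈ (Icc (a+1) (j-1)).erase i, f i l) * δ i)
        - ∑ i ∈ Icc (a+1) (j-1),
            (f i a * ∏ l ∈ (Icc (a+1) (j-1)).erase i, f i l) * δ i := by
    rw [Finset.mul_sum, Finset.mul_sum, ← Finset.sum_sub_distrib]
    refine Finset.sum_congr rfl fun i hi => ?_
    simp only [mem_Icc] at hi
    have h3 := E3 i hi.1 hi.2
    linear_combination ((∏ l ∈ (Icc (a+1) (j-1)).erase i, f i l) * δ i) * h3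
  field_simp
  simp only [mul_assoc] at hsum ⊢
  linear_combination ((∏ l ∈ Icc (a+1) (j-1), f a l) * δ a) * E1
    + ((∏ l ∈ Icc (a+1) (j-1), f j l) * δ j) * E2 + hsum

lemma key (y : ℝ → ℝ) (h : ℝ) (T : ℕ → ℕ → ℝ)
    (hT1 : ∀ j : ℕ, 1 ≤ j → T j 1 = (y (j * h) - y (-(j * h))) / (2 * j * h))
    (hTrec : ∀ j k : ℕ, 1 ≤ k → k ≤ j - 1 →
      T j (k + 1) = T j k + (T j k - T (j - 1) k) / ((1 - (k : ℝ) / j) ^ 2 - 1)) :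
    ∀ k j : ℕ, 1 ≤ k → k ≤ j →
      T j k = ∑ i ∈ Icc (j-k+1) j,
        (∏ l ∈ (Icc (j-k+1) j).erase i, ((l:ℝ)^2 / ((l:ℝ)^2 - (i:ℝ)^2)))
          * ((y (i * h) - y (-(i * h))) / (2 * i * h)) := by
  intro k
  induction k with
  | zero => intro j h0; exact absurd h0 (by omega)
  | succ k ih =>
    intro j hk1 hkj
    rcases Nat.eq_zero_or_pos k with rfl | hk
    · have hj : 1 ≤ j := hkj
      have h1 : j - 1 + 1 = j := by omega
      rw [h1, Finset.Icc_self, Finset.sum_singleton, Finset.erase_singleton,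
        Finset.prod_empty, one_mul, hT1 j hj]
    · have hkj' : k + 1 ≤ j := hkj
      rw [hTrec j k hk (by omega), ih j hk (by omega), ih (j-1) hk (by omega)]
      have i1 : j - (k+1) + 1 = j - k := by omega
      have i2 : j - k + 1 = (j - k) + 1 := rfl
      have i3 : (j-1) - k + 1 = j - k := by omega
      rw [i1, i3]
      set a := j - k with ha
      have ha1 : 1 ≤ a := by omega
      have haj : a < j := by omega
      -- the q value
      have hjne : (j:ℝ) ≠ 0 := Nat.cast_ne_zero.mpr (by omega)
      have hacast : (a:ℝ) = (j:ℝ) - (k:ℝ) := by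
        rw [ha]; push_cast [Nat.cast_sub (show k ≤ j by omega)]; ring
      have hq : (1 - (k:ℝ)/j)^2 - 1 = ((a:ℝ)^2 - (j:ℝ)^2) / (j:ℝ)^2 := by
        rw [hacast]; field_simp
      have haj2 : (a:ℝ)^2 - (j:ℝ)^2 ≠ 0 := ne_sq a j (by omega)
      have hq0 : (1 - (k:ℝ)/j)^2 - 1 ≠ 0 := by
        rw [hq]; exact div_ne_zero haj2 (pow_ne_zero _ hjne)
      refine (sum_step a j ha1 haj _ hq0 (fun i l => (l:ℝ)^2 / ((l:ℝ)^2 - (i:ℝ)^2))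
        (fun i => (y (i * h) - y (-(i * h))) / (2 * i * h)) ?_ ?_ ?_).symm
      · have hja : (j:ℝ)^2 - (a:ℝ)^2 ≠ 0 := ne_sq j a (by omega)
        rw [hq]
        field_simp
        ring
      · rw [hq]
        field_simp
        ring
      · intro i hi1 hi2
        have hia : (a:ℝ)^2 - (i:ℝ)^2 ≠ 0 := ne_sq a i (by omega)
        have hij : (j:ℝ)^2 - (i:ℝ)^2 ≠ 0 := ne_sq j i (by omega)
        rw [hq]
        field_simp
        ring

/-- The diagonal entries of the Richardson extrapolation table equal the symmetric
central-difference approximation using `2m` points. -/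
theorem richardson_diagonal_eq_central_difference
    (y : ℝ → ℝ) (h : ℝ) (hh : 0 < h) (T : ℕ → ℕ → ℝ)
    (hT1 : ∀ j : ℕ, 1 ≤ j → T j 1 = (y (j * h) - y (-(j * h))) / (2 * j * h))
    (hTrec : ∀ j k : ℕ, 1 ≤ k → k ≤ j - 1 →
      T j (k + 1) = T j k + (T j k - T (j - 1) k) / ((1 - (k : ℝ) / j) ^ 2 - 1)) :
    ∀ m : ℕ, 1 ≤ m →
      T m m = ∑ j ∈ Finset.Icc 1 m,
        ((-1 : ℝ) ^ (j + 1) * (m.factorial : ℝ) ^ 2) /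
            ((j : ℝ) * h * ((m - j).factorial : ℝ) * ((m + j).factorial : ℝ)) *
          (y (j * h) - y (-(j * h))) := by
  intro m hm
  rw [key y h T hT1 hTrec m m hm le_rfl]
  have h1 : m - m + 1 = 1 := by omega
  rw [h1]
  refine Finset.sum_congr rfl fun i hi => ?_
  simp only [mem_Icc] at hi
  rw [coeff_eq i hi.1 m hi.2]
  have hz1 : ((m-i).factorial : ℝ) ≠ 0 := by positivity
  have hz2 : ((m+i).factorial : ℝ) ≠ 0 := by positivity
  have hz3 : (i:ℝ) ≠ 0 := Nat.cast_ne_zero.mpr (by omega)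
  have hz4 : h ≠ 0 := ne_of_gt hh
  field_simp
end

section
/- The central difference formula is exact for low-degree polynomials: if y is a polynomial of degree at most 2m, then D_m y(0) = y'(0), where D_m y(0) = \sum_{j=1}^m \frac{(-1)^{j+1}(m!)^2}{j h (m-j)!(m+j)!}(y(jh) - y(-jh)). -/
open Polynomial Finset

lemma my_eval_shift_sub (p : ℝ[X]) (c : ℝ) :
    fwdDiff c (fun x => p.eval x) = fun x => (p.comp (X + C c) - p).eval x := by
  funext x
  simp [fwdDiff, eval_comp]

lemma my_natDegree_shift_sub_lt (p : ℝ[X]) (c : ℝ) {n : ℕ} (hn : 1 ≤ n)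
    (hp : p.natDegree ≤ n) : (p.comp (X + C c) - p).natDegree < n := by
  rcases eq_or_ne (p.comp (X + C c) - p) 0 with h0 | h0
  · rw [h0, natDegree_zero]; exact hn
  · have hp0 : p ≠ 0 := by rintro rfl; simp at h0
    have hlc : (p.comp (X + C c)).leadingCoeff = p.leadingCoeff := by
      rw [leadingCoeff_comp (by simp)]
      simp [(monic_X_add_C c).leadingCoeff]
    have hcomp0 : p.comp (X + C c) ≠ 0 :=
      leadingCoeff_ne_zero.mp (by rw [hlc]; exact leadingCoeff_ne_zero.mpr hp0)
    have hdeg : (p.comp (X + C c)).degree = p.degree := by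
      rw [degree_eq_natDegree hcomp0, degree_eq_natDegree hp0, natDegree_comp]
      simp
    have hlt := degree_sub_lt hdeg hcomp0 hlc
    rw [hdeg] at hlt
    have h2 : (p.comp (X + C c) - p).degree < (n : WithBot ℕ) :=
      lt_of_lt_of_le hlt (le_trans degree_le_natDegree (by exact_mod_cast hp))
    exact (natDegree_lt_iff_degree_lt h0).mpr h2

lemma my_fwdDiff_iter_poly_eq_zero (c : ℝ) :
    ∀ (n : ℕ) (p : ℝ[X]), p.natDegree < n → ∀ y : ℝ,
      (fwdDiff c)^[n] (fun x => p.eval x) y = 0 := by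
  intro n
  induction n with
  | zero => intro p hp; omega
  | succ n ih =>
    intro p hp y
    rw [Function.iterate_succ_apply, my_eval_shift_sub]
    rcases Nat.eq_zero_or_pos n with rfl | hn
    · have hd : p.natDegree = 0 := by omega
      obtain ⟨a, rfl⟩ := natDegree_eq_zero.mp hd
      simp
    · exact ih _ (my_natDegree_shift_sub_lt p c hn (by omega)) y

lemma my_split (m : ℕ) (g : ℕ → ℝ) :
    ∑ k ∈ Finset.range (2*m+1), g k
      = (∑ j ∈ Finset.Icc 1 m, g (m - j)) + g m + ∑ j ∈ Finset.Icc 1 m, g (m + j) := by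
  have hc : ∑ k ∈ Finset.Ico 0 (m+1), g k + ∑ k ∈ Finset.Ico (m+1) (2*m+1), g k
      = ∑ k ∈ Finset.Ico 0 (2*m+1), g k :=
    Finset.sum_Ico_consecutive _ (by omega) (by omega)
  rw [Finset.range_eq_Ico, ← hc, ← Finset.range_eq_Ico, Finset.sum_range_succ]
  have h1 : ∑ k ∈ Finset.range m, g k = ∑ j ∈ Finset.Icc 1 m, g (m - j) := by
    refine Finset.sum_bij' (fun k _ => m - k) (fun j _ => m - j)
      (fun k hk => ?_) (fun j hj => ?_) (fun k hk => ?_) (fun j hj => ?_) (fun k hk => ?_)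
    · simp only [Finset.mem_range] at hk; simp only [Finset.mem_Icc]; omega
    · simp only [Finset.mem_Icc] at hj; simp only [Finset.mem_range]; omega
    · simp only [Finset.mem_range] at hk; beta_reduce; omega
    · simp only [Finset.mem_Icc] at hj; beta_reduce; omega
    · simp only [Finset.mem_range] at hk; beta_reduce; congr 1; omega
  have h2 : ∑ k ∈ Finset.Ico (m+1) (2*m+1), g k = ∑ j ∈ Finset.Icc 1 m, g (m + j) := by
    refine Finset.sum_bij' (fun k _ => k - m) (fun j _ => m + j)
      (fun k hk => ?_) (fun j hj => ?_) (fun k hk => ?_) (fun j hj => ?_) (fun k hk => ?_)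
    · simp only [Finset.mem_Ico] at hk; simp only [Finset.mem_Icc]; omega
    · simp only [Finset.mem_Icc] at hj; simp only [Finset.mem_Ico]; omega
    · simp only [Finset.mem_Ico] at hk; beta_reduce; omega
    · simp only [Finset.mem_Icc] at hj; beta_reduce; omega
    · simp only [Finset.mem_Ico] at hk; beta_reduce; congr 1; omega
  rw [h1, h2]

/-- The symmetric central-difference formula using `2m` points is exact
for polynomials of degree at most `2m`. -/
theorem central_difference_exact_on_polynomials
    (m : ℕ) (hm : 1 ≤ m) (h : ℝ) (hh : 0 < h)
    (P : Polynomial ℝ) (hdeg : P.natDegree ≤ 2 * m) :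
    (∑ j ∈ Finset.Icc 1 m,
        ((-1 : ℝ) ^ (j + 1) * (m.factorial : ℝ) ^ 2) /
            ((j : ℝ) * h * ((m - j).factorial : ℝ) * ((m + j).factorial : ℝ)) *
          (P.eval ((j : ℝ) * h) - P.eval (-((j : ℝ) * h))))
      = P.derivative.eval 0 := by
  obtain ⟨R, hR⟩ : (X : ℝ[X]) ∣ (P.comp (C h * X) - P.comp (C (-h) * X)) := by
    rw [X_dvd_iff]
    simp [coeff_zero_eq_eval_zero, eval_comp]
  have hSR : ∀ x : ℝ, P.eval (h * x) - P.eval (-(h * x)) = x * R.eval x := by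
    intro x
    have := congrArg (Polynomial.eval x) hR
    simpa [eval_comp] using this
  have hR0 : R.eval 0 = 2 * h * P.derivative.eval 0 := by
    have hd := congrArg Polynomial.derivative hR
    have h2 := congrArg (Polynomial.eval 0) hd
    simp [derivative_comp, eval_comp, derivative_mul] at h2
    linarith
  have hRdeg : R.natDegree < 2 * m := by
    rcases eq_or_ne R 0 with rfl | hR0'
    · simpa using by omega
    · have hs : (P.comp (C h * X) - P.comp (C (-h) * X)).natDegree ≤ 2 * m := by
        refine le_trans (natDegree_sub_le _ _) ?_
        simp [natDegree_comp, natDegree_C_mul_X _ (ne_of_gt hh),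
          natDegree_C_mul_X (-h) (by linarith : (-h) ≠ 0), hdeg]
      rw [hR, natDegree_mul X_ne_zero hR0', natDegree_X] at hs
      omega
  have hReven : ∀ x : ℝ, x ≠ 0 → R.eval (-x) = R.eval x := by
    intro x hx
    have h1 := hSR x
    have h2 := hSR (-x)
    rw [mul_neg, neg_neg] at h2
    have h3 : x * R.eval (-x) = x * R.eval x := by linarith
    exact mul_left_cancel₀ hx h3
  -- the alternating binomial sum identity
  set g : ℕ → ℝ := fun k => (-1:ℝ)^k * ((2*m).choose k : ℝ) * R.eval ((k:ℝ) - m) with hg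
  have key : ∑ k ∈ Finset.range (2*m+1), g k = 0 := by
    have hzero := my_fwdDiff_iter_poly_eq_zero 1 (2*m) R hRdeg (-(m:ℝ))
    rw [fwdDiff_iter_eq_sum_shift] at hzero
    rw [← hzero]
    refine Finset.sum_congr rfl fun k hk => ?_
    have hk' : k ≤ 2*m := by simpa [Nat.lt_succ_iff] using hk
    have hsign : ((-1:ℝ)^(2*m - k)) = (-1)^k := by
      have h1 : (-1:ℝ)^(2*m - k) * (-1)^k = 1 := by
        rw [← pow_add, Nat.sub_add_cancel hk']
        simp [pow_mul]
      have h2 : ((-1:ℝ)^k) * ((-1:ℝ)^k) = 1 := by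
        rw [← pow_add, ← two_mul, pow_mul]; simp
      exact mul_right_cancel₀ (by simp : ((-1:ℝ)^k) ≠ 0) (h1.trans h2.symm)
    rw [hg]
    rw [zsmul_eq_mul]
    push_cast
    rw [hsign, nsmul_eq_mul]
    ring_nf
  rw [my_split m g] at key
  -- fold the left half onto the right half
  have hgj : ∀ j ∈ Finset.Icc 1 m, g (m - j) = g (m + j) := by
    intro j hj
    rw [Finset.mem_Icc] at hj
    obtain ⟨hj1, hjm⟩ := hj
    have e1 : 2*m - (m+j) = m - j := by omega
    have hc : (2*m).choose (m-j) = (2*m).choose (m+j) := by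
      rw [← e1]; exact Nat.choose_symm (by omega)
    have hsign : (-1:ℝ)^(m-j) = (-1)^(m+j) := by
      have e2 : m + j = (m - j) + 2*j := by omega
      rw [e2, pow_add, pow_mul]; simp
    have hcast1 : ((m - j : ℕ) : ℝ) - m = -(j:ℝ) := by
      rw [Nat.cast_sub hjm]; ring
    have hcast2 : ((m + j : ℕ) : ℝ) - m = (j:ℝ) := by push_cast; ring
    have hjne : (j:ℝ) ≠ 0 := by positivity
    rw [hg]
    simp only
    rw [hc, hsign, hcast1, hcast2, hReven _ hjne]
  rw [Finset.sum_congr rfl hgj] at key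
  -- now: 2 * ∑ g (m+j) + g m = 0
  set A : ℝ := ∑ j ∈ Finset.Icc 1 m, (-1:ℝ)^j * ((2*m).choose (m+j) : ℝ) * R.eval (j:ℝ) with hA
  have hgsum : ∑ j ∈ Finset.Icc 1 m, g (m + j) = (-1:ℝ)^m * A := by
    rw [hA, Finset.mul_sum]
    refine Finset.sum_congr rfl fun j hj => ?_
    rw [Finset.mem_Icc] at hj
    have hcast2 : ((m + j : ℕ) : ℝ) - m = (j:ℝ) := by push_cast; ring
    rw [hg]
    simp only
    rw [hcast2, pow_add]
    ring
  have hgm : g m = (-1:ℝ)^m * ((2*m).choose m : ℝ) * R.eval 0 := by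
    rw [hg]; simp only; rw [sub_self]
  rw [hgsum, hgm] at key
  have hCne : (((2*m).choose m : ℕ) : ℝ) ≠ 0 := by
    exact_mod_cast (Nat.choose_pos (show m ≤ 2*m by omega)).ne'
  have hAval : A = -((((2*m).choose m : ℕ):ℝ) * R.eval 0) / 2 := by
    have h2 : ((-1:ℝ)^m) * (2*A + (((2*m).choose m : ℕ):ℝ) * R.eval 0) = 0 := by
      ring_nf
      ring_nf at key
      linarith
    rcases mul_eq_zero.mp h2 with hc | hc
    · exact absurd hc (by simp)
    · linarith
  have hterm : ∀ j ∈ Finset.Icc 1 m,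
      ((-1 : ℝ) ^ (j + 1) * (m.factorial : ℝ) ^ 2) /
            ((j : ℝ) * h * ((m - j).factorial : ℝ) * ((m + j).factorial : ℝ)) *
          (P.eval ((j : ℝ) * h) - P.eval (-((j : ℝ) * h)))
        = ((-1:ℝ)^j * (((2*m).choose (m+j) : ℕ):ℝ) * R.eval (j:ℝ)) *
            (-(1/((((2*m).choose m : ℕ):ℝ) * h))) := by
    intro j hj
    rw [Finset.mem_Icc] at hj
    obtain ⟨hj1, hjm⟩ := hj
    have hf1 : ((2*m).choose m) * m.factorial * m.factorial = (2*m).factorial := by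
      have h5 := Nat.choose_mul_factorial_mul_factorial (show m ≤ 2*m by omega)
      rwa [show 2*m - m = m by omega] at h5
    have hf2 : ((2*m).choose (m+j)) * (m+j).factorial * (m-j).factorial
        = (2*m).factorial := by
      have h5 := Nat.choose_mul_factorial_mul_factorial (show m + j ≤ 2*m by omega)
      rwa [show 2*m - (m+j) = m - j by omega] at h5
    have hc1 : ((((2*m).choose m : ℕ)):ℝ) * (m.factorial:ℝ) * (m.factorial:ℝ)
        = ((2*m).factorial : ℝ) := by exact_mod_cast hf1
    have hc2 : ((((2*m).choose (m+j) : ℕ)):ℝ) * ((m+j).factorial:ℝ) * ((m-j).factorial:ℝ)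
        = ((2*m).factorial : ℝ) := by exact_mod_cast hf2
    have hc3 : ((m.factorial:ℝ))^2 * (((2*m).choose m : ℕ):ℝ)
        = (((2*m).choose (m+j) : ℕ):ℝ) * ((m-j).factorial:ℝ) * ((m+j).factorial:ℝ) := by
      linear_combination hc1 - hc2
    have hjne : (j:ℝ) ≠ 0 := by positivity
    have hfne1 : (((m-j).factorial : ℕ):ℝ) ≠ 0 := by
      exact_mod_cast (Nat.factorial_ne_zero _)
    have hfne2 : (((m+j).factorial : ℕ):ℝ) ≠ 0 := by
      exact_mod_cast (Nat.factorial_ne_zero _)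
    rw [mul_comm (j:ℝ) h, hSR (j:ℝ)]
    field_simp
    linear_combination (-((-1:ℝ)^j * R.eval (j:ℝ))) * hc3
  rw [Finset.sum_congr rfl hterm, ← Finset.sum_mul, ← hA, hAval, hR0]
  field_simp
end

section
/- With K_m(z) = (-1)^{m+1}(m!)² h^{2m} / (z²(z²-h²)⋯(z²-(mh)²)) and ρ, h > 0, the bound |K_m(iρ)| ≤ (π/(ρ h sinh(πρ/h))) exp(ρ²/(h² m)) holds for every integer m ≥ 1. -/
open Complex Filter Finset Topology

/-- Euler product for sinh. -/
lemma sinh_euler_prod (x : ℝ) :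
    Tendsto (fun n : ℕ => Real.pi * x * ∏ j ∈ range n, ((1 : ℝ) + x ^ 2 / ((j : ℝ) + 1) ^ 2))
      atTop (𝓝 (Real.sinh (Real.pi * x))) := by
  have h := Complex.tendsto_euler_sin_prod ((x : ℂ) * I)
  have h2 := (Complex.continuous_im.tendsto _).comp h
  have e1 : Complex.sin (↑Real.pi * ((x:ℂ) * I)) = (Real.sinh (Real.pi * x) : ℂ) * I := by
    rw [← mul_assoc, ← Complex.ofReal_mul, Complex.sin_mul_I, Complex.ofReal_sinh]
  rw [e1] at h2
  simp only [Complex.mul_I_im, Complex.ofReal_re] at h2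
  refine h2.congr fun n => ?_
  simp only [Function.comp_apply]
  have e3 : (∏ j ∈ range n, ((1 : ℂ) - ((x:ℂ)*I) ^ 2 / ((j : ℂ) + 1) ^ 2))
      = ((∏ j ∈ range n, ((1 : ℝ) + x ^ 2 / ((j : ℝ) + 1) ^ 2) : ℝ) : ℂ) := by
    push_cast
    refine Finset.prod_congr rfl fun j _ => ?_
    have : ((x:ℂ)*I)^2 = -(x:ℂ)^2 := by
      rw [mul_pow, Complex.I_sq]; ring
    rw [this]; ring
  rw [e3]
  have e4 : (↑Real.pi * ((x:ℂ) * I) * ((∏ j ∈ range n, ((1 : ℝ) + x ^ 2 / ((j : ℝ) + 1) ^ 2) : ℝ) : ℂ))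
      = ((Real.pi * x * ∏ j ∈ range n, ((1 : ℝ) + x ^ 2 / ((j : ℝ) + 1) ^ 2) : ℝ) : ℂ) * I := by
    push_cast; ring
  rw [e4, Complex.mul_I_im, Complex.ofReal_re]


lemma tail_sum_bound (m : ℕ) (hm : 1 ≤ m) : ∀ n, m ≤ n →
    ∑ j ∈ Ico m n, (1:ℝ)/((j:ℝ)+1)^2 ≤ 1/(m:ℝ) := by
  have key : ∀ n, m ≤ n → ∑ j ∈ Ico m n, (1:ℝ)/((j:ℝ)+1)^2 ≤ 1/(m:ℝ) - 1/(n:ℝ) := by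
    intro n hn
    induction n, hn using Nat.le_induction with
    | base => simp
    | succ n hn ih =>
      rw [Finset.sum_Ico_succ_top hn]
      have hn0 : (0:ℝ) < n := by
        have : 1 ≤ n := le_trans hm hn
        exact_mod_cast Nat.lt_of_lt_of_le Nat.zero_lt_one this
      have step : (1:ℝ)/((n:ℝ)+1)^2 ≤ 1/(n:ℝ) - 1/((n:ℝ)+1) := by
        rw [div_sub_div _ _ (ne_of_gt hn0) (by positivity)]
        rw [div_le_div_iff₀ (by positivity) (by positivity)]
        ring_nf
        nlinarith
      push_cast
      have := ih
      push_cast at this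
      linarith
  intro n hn
  have h1 : (0:ℝ) ≤ 1/(n:ℝ) := by positivity
  linarith [key n hn]

lemma sinh_le_prod (x : ℝ) (hx : 0 ≤ x) (m : ℕ) (hm : 1 ≤ m) :
    Real.sinh (Real.pi * x) ≤
      Real.pi * x * (∏ j ∈ range m, ((1:ℝ) + x^2/((j:ℝ)+1)^2)) * Real.exp (x^2/(m:ℝ)) := by
  refine le_of_tendsto (sinh_euler_prod x) ?_
  filter_upwards [Filter.eventually_ge_atTop m] with n hn
  have hsplit := Finset.prod_range_mul_prod_Ico
    (fun j : ℕ => (1:ℝ) + x^2/((j:ℝ)+1)^2) hn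
  have hP : (0:ℝ) ≤ ∏ j ∈ range m, ((1:ℝ) + x^2/((j:ℝ)+1)^2) :=
    Finset.prod_nonneg fun j _ => by positivity
  have htail : (∏ j ∈ Ico m n, ((1:ℝ) + x^2/((j:ℝ)+1)^2)) ≤ Real.exp (x^2/(m:ℝ)) := by
    calc (∏ j ∈ Ico m n, ((1:ℝ) + x^2/((j:ℝ)+1)^2))
        ≤ ∏ j ∈ Ico m n, Real.exp (x^2/((j:ℝ)+1)^2) := by
          refine Finset.prod_le_prod (fun j _ => by positivity) (fun j _ => ?_)
          have := Real.add_one_le_exp (x^2/((j:ℝ)+1)^2)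
          linarith
      _ = Real.exp (∑ j ∈ Ico m n, x^2/((j:ℝ)+1)^2) := (Real.exp_sum _ _).symm
      _ ≤ Real.exp (x^2/(m:ℝ)) := by
          apply Real.exp_le_exp.2
          have : ∑ j ∈ Ico m n, x^2/((j:ℝ)+1)^2
              = x^2 * ∑ j ∈ Ico m n, (1:ℝ)/((j:ℝ)+1)^2 := by
            rw [Finset.mul_sum]; exact Finset.sum_congr rfl fun j _ => by ring
          rw [this, div_eq_mul_one_div (x^2)]
          exact mul_le_mul_of_nonneg_left (tail_sum_bound m hm n hn) (by positivity)
  calc Real.pi * x * ∏ j ∈ range n, ((1:ℝ) + x^2/((j:ℝ)+1)^2)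
      = Real.pi * x * ((∏ j ∈ range m, ((1:ℝ) + x^2/((j:ℝ)+1)^2)) *
          ∏ j ∈ Ico m n, ((1:ℝ) + x^2/((j:ℝ)+1)^2)) := by rw [hsplit]
    _ ≤ Real.pi * x * ((∏ j ∈ range m, ((1:ℝ) + x^2/((j:ℝ)+1)^2)) * Real.exp (x^2/(m:ℝ))) := by
        refine mul_le_mul_of_nonneg_left ?_ (by positivity)
        exact mul_le_mul_of_nonneg_left htail hP
    _ = Real.pi * x * (∏ j ∈ range m, ((1:ℝ) + x^2/((j:ℝ)+1)^2)) * Real.exp (x^2/(m:ℝ)) := by ring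

/-- Bound on the error kernel at `z = iρ`:
`|K_m(iρ)| ≤ (π/(ρ h sinh(πρ/h))) exp(ρ²/(h²m))`. -/
theorem kernel_bound_at_i_rho (h ρ : ℝ) (hh : 0 < h) (hρ : 0 < ρ)
    (m : ℕ) (hm : 1 ≤ m) :
    ‖(((-1 : ℂ) ^ (m + 1) * (m.factorial : ℂ) ^ 2 * (h : ℂ) ^ (2 * m)) /
        ((I * ρ) ^ 2 * ∏ j ∈ Finset.Icc 1 m, ((I * ρ) ^ 2 - ((j : ℂ) * h) ^ 2)))‖
      ≤ Real.pi / (ρ * h * Real.sinh (Real.pi * ρ / h)) *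
          Real.exp (ρ ^ 2 / (h ^ 2 * m)) := by
  set x : ℝ := ρ / h with hx
  have hx0 : 0 < x := div_pos hρ hh
  set D : ℝ := ρ^2 * ∏ j ∈ Finset.Icc 1 m, (ρ^2 + ((j:ℝ)*h)^2) with hD
  have hDpos : 0 < D := by
    apply mul_pos (by positivity)
    exact Finset.prod_pos fun j _ => by positivity
  -- step 1: denominator identity
  have hcast : ((∏ j ∈ Finset.Icc 1 m, (ρ^2 + ((j:ℝ)*h)^2) : ℝ) : ℂ)
      = ∏ j ∈ Finset.Icc 1 m, ((ρ:ℂ)^2 + ((j:ℂ)*(h:ℂ))^2) := by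
    push_cast; ring_nf
  have hden : ((I * (ρ:ℂ)) ^ 2 * ∏ j ∈ Finset.Icc 1 m, ((I * (ρ:ℂ)) ^ 2 - ((j : ℂ) * h) ^ 2))
      = (-1:ℂ)^(m+1) * ((D : ℝ) : ℂ) := by
    have hI : (I * (ρ:ℂ)) ^ 2 = -(ρ:ℂ)^2 := by
      rw [mul_pow, Complex.I_sq]; ring
    have hfac : ∀ j ∈ Finset.Icc 1 m,
        (I * (ρ:ℂ)) ^ 2 - ((j : ℂ) * h) ^ 2 = (-1) * ((ρ:ℂ)^2 + ((j:ℂ)*(h:ℂ))^2) := by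
      intro j _; rw [hI]; ring
    rw [Finset.prod_congr rfl hfac, Finset.prod_mul_distrib, Finset.prod_const,
      Nat.card_Icc, hI, hD, Nat.add_sub_cancel, Complex.ofReal_mul, hcast, pow_succ]
    push_cast
    ring
  -- step 2: abs equals real quotient
  have habs : ‖(((-1 : ℂ) ^ (m + 1) * (m.factorial : ℂ) ^ 2 * (h : ℂ) ^ (2 * m)) /
        ((I * ρ) ^ 2 * ∏ j ∈ Finset.Icc 1 m, ((I * ρ) ^ 2 - ((j : ℂ) * h) ^ 2)))‖
      = ((m.factorial : ℝ)^2 * h^(2*m)) / D := by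
    rw [hden, mul_assoc, mul_div_mul_left _ _ (by simp : ((-1:ℂ)^(m+1)) ≠ 0)]
    have : ((m.factorial : ℂ) ^ 2 * (h:ℂ) ^ (2*m)) / ((D:ℝ):ℂ)
        = ((((m.factorial : ℝ)^2 * h^(2*m)) / D : ℝ) : ℂ) := by
      push_cast; ring
    rw [this, Complex.norm_real, Real.norm_eq_abs]
    exact abs_of_nonneg (by positivity)
  rw [habs]
  -- step 3: rewrite D via x
  set P : ℝ := ∏ j ∈ Finset.range m, ((1:ℝ) + x^2/((j:ℝ)+1)^2) with hP
  have hPpos : 0 < P := Finset.prod_pos fun j _ => by positivity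
  have hDval : D = ρ^2 * (h^(2*m) * (m.factorial:ℝ)^2 * P) := by
    rw [hD]
    congr 1
    rw [← Finset.Ico_add_one_right_eq_Icc, Finset.prod_Ico_eq_prod_range]
    simp only [Nat.add_sub_cancel]
    have hterm : ∀ i ∈ Finset.range m,
        ρ^2 + (((1 + i : ℕ):ℝ)*h)^2 = (h^2 * ((i:ℝ)+1)^2) * ((1:ℝ) + x^2/((i:ℝ)+1)^2) := by
      intro i _
      push_cast
      rw [hx]
      field_simp
      ring
    rw [Finset.prod_congr rfl hterm, Finset.prod_mul_distrib, Finset.prod_mul_distrib,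
      Finset.prod_const, Finset.prod_pow, ← hP, Finset.card_range]
    have hfact : ∏ i ∈ Finset.range m, ((i:ℝ)+1) = (m.factorial : ℝ) := by
      rw [← Finset.prod_range_add_one_eq_factorial m]
      push_cast
      ring
    rw [hfact, ← pow_mul]
  -- step 4: final inequality
  set S : ℝ := Real.sinh (Real.pi * ρ / h) with hS
  have hSx : S = Real.sinh (Real.pi * x) := by rw [hS, hx, mul_div_assoc]
  have hSpos : 0 < S := by
    rw [hSx]; exact Real.sinh_pos_iff.2 (by positivity)
  have hE : x^2/(m:ℝ) = ρ^2/(h^2*m) := by rw [hx, div_pow, div_div]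
  have hsinh : S ≤ Real.pi * x * P * Real.exp (ρ^2/(h^2*m)) := by
    rw [hSx, ← hE]; exact sinh_le_prod x hx0.le m hm
  have hquot : ((m.factorial : ℝ)^2 * h^(2*m)) / D = 1 / (ρ^2 * P) := by
    rw [hDval]
    have hf : (m.factorial : ℝ) ≠ 0 := Nat.cast_ne_zero.2 m.factorial_ne_zero
    field_simp
  rw [hquot, div_mul_eq_mul_div, div_le_div_iff₀ (by positivity) (by positivity), one_mul]
  have h1 : ρ * h * S ≤ ρ * h * (Real.pi * x * P * Real.exp (ρ^2/(h^2*m))) :=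
    mul_le_mul_of_nonneg_left hsinh (by positivity)
  have h2 : ρ * h * (Real.pi * x * P * Real.exp (ρ^2/(h^2*m)))
      = Real.pi * Real.exp (ρ^2/(h^2*m)) * (ρ^2 * P) := by
    rw [hx]; field_simp
  linarith
end

section
/- Let y be holomorphic on the strip {z ∈ ℂ : |Im z| < ρ'} for some ρ' > ρ > 0 and bounded on {|Im z| ≤ ρ}. Then for h > 0, m ≥ 1, the central-difference error admits the contour-integral representation D_m y(0) − y'(0) = (1/(2πi)) ∮_γ K_m(z) y(z) dz, where γ is a rectangular contour of height 2ρ enclosing the points −mh, …, mh, and K_m(z) = (-1)^{m+1}(m!)² h^{2m}/(z²(z²-h²)⋯(z²-(mh)²)). -/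
open Complex intervalIntegral

theorem pfrac {ι : Type*} [DecidableEq ι] (s : Finset ι) (hs : s.Nonempty) (a : ι → ℂ)
    (hinj : Set.InjOn a s) :
    ∀ w : ℂ, (∀ i ∈ s, w ≠ a i) →
      (∏ i ∈ s, (w - a i))⁻¹ = ∑ i ∈ s, ((w - a i) * ∏ j ∈ s.erase i, (a i - a j))⁻¹ := by
  induction s using Finset.cons_induction with
  | empty => exact absurd hs (by simp)
  | cons b s hb ih =>
    have hsub : (s : Set ι) ⊆ ↑(Finset.cons b s hb) := by
      simp [Finset.coe_cons, Set.subset_insert]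
    rcases s.eq_empty_or_nonempty with rfl | hsne
    · intro w hw; simp
    · intro w hw
      have hinj' : Set.InjOn a s := hinj.mono hsub
      have hw' : ∀ i ∈ s, w ≠ a i := fun i hi => hw i (Finset.mem_cons_of_mem hi)
      have hwb : w ≠ a b := hw b (Finset.mem_cons_self b s)
      have hab : ∀ i ∈ s, a i ≠ a b := by
        intro i hi habs
        exact hb (by
          have : i = b := hinj (hsub hi) (Finset.mem_coe.2 (Finset.mem_cons_self b s)) habs
          rwa [this] at hi)
      have hIHw := ih hsne hinj' w hw'
      have hIHb := ih hsne hinj' (a b) (fun i hi => (hab i hi).symm)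
      rw [Finset.prod_cons, Finset.sum_cons, Finset.erase_cons]
      have key : ∀ i ∈ s,
          (w - a b)⁻¹ * ((w - a i) * ∏ j ∈ s.erase i, (a i - a j))⁻¹
            = ((w - a i) * ((a i - a b) * ∏ j ∈ s.erase i, (a i - a j)))⁻¹
              + ((a b - a i) * ∏ j ∈ s.erase i, (a i - a j))⁻¹ * (w - a b)⁻¹ := by
        intro i hi
        have h1 : w - a b ≠ 0 := sub_ne_zero.2 hwb
        have h2 : w - a i ≠ 0 := sub_ne_zero.2 (hw' i hi)
        have h3 : a i - a b ≠ 0 := sub_ne_zero.2 (hab i hi)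
        have h4 : a b - a i ≠ 0 := sub_ne_zero.2 (Ne.symm (hab i hi))
        rcases eq_or_ne (∏ j ∈ s.erase i, (a i - a j)) 0 with hP | hP
        · simp [hP]
        · field_simp
          ring
      calc ((w - a b) * ∏ i ∈ s, (w - a i))⁻¹
          = (w - a b)⁻¹ * ∑ i ∈ s, ((w - a i) * ∏ j ∈ s.erase i, (a i - a j))⁻¹ := by
            rw [mul_inv, hIHw]
        _ = ∑ i ∈ s, (w - a b)⁻¹ * ((w - a i) * ∏ j ∈ s.erase i, (a i - a j))⁻¹ := by
            rw [Finset.mul_sum]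
        _ = (∑ i ∈ s, ((w - a i) * ((a i - a b) * ∏ j ∈ s.erase i, (a i - a j)))⁻¹)
            + (∑ i ∈ s, ((a b - a i) * ∏ j ∈ s.erase i, (a i - a j))⁻¹) * (w - a b)⁻¹ := by
            rw [Finset.sum_congr rfl key, Finset.sum_add_distrib, Finset.sum_mul]
        _ = ((w - a b) * ∏ j ∈ s, (a b - a j))⁻¹
            + ∑ i ∈ s, ((w - a i) * ∏ j ∈ (Finset.cons b s hb).erase i, (a i - a j))⁻¹ := by
            rw [← hIHb]
            have : ∀ i ∈ s, ((w - a i) * ((a i - a b) * ∏ j ∈ s.erase i, (a i - a j)))⁻¹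
                = ((w - a i) * ∏ j ∈ (Finset.cons b s hb).erase i, (a i - a j))⁻¹ := by
              intro i hi
              have hib : i ≠ b := fun hEq => hb (hEq ▸ hi)
              rw [Finset.erase_cons_of_ne hb hib.symm, Finset.prod_cons]
            rw [Finset.sum_congr rfl this, mul_inv]
            ring

lemma prodA1 (k : ℕ) : ∏ j ∈ Finset.range k, ((k : ℂ) - j) = k.factorial := by
  induction k with
  | zero => simp
  | succ k ih =>
    rw [Finset.prod_range_succ']
    push_cast
    rw [show (∏ j ∈ Finset.range k, ((k:ℂ) + 1 - (↑j + 1))) = ∏ j ∈ Finset.range k, ((k:ℂ) - j) from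
      Finset.prod_congr rfl (fun j _ => by ring)]
    rw [ih]
    push_cast [Nat.factorial_succ]
    ring

lemma prodA2 (k : ℕ) : ∀ m, k ≤ m → ∏ j ∈ Finset.Ico (k+1) (m+1), ((k : ℂ) - j)
    = (-1)^(m-k) * ((m-k).factorial : ℂ) := by
  intro m
  induction m with
  | zero => intro hk; have : k = 0 := by omega
            subst this; simp
  | succ m ih =>
    intro hk
    rcases Nat.lt_or_ge k (m+1) with hlt | hge
    · have hk' : k ≤ m := by omega
      rw [Finset.prod_Ico_succ_top (by omega)]
      rw [ih hk']
      have h1 : (k : ℂ) - ((m+1 : ℕ) : ℂ) = -(((m+1-k : ℕ)) : ℂ) := by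
        push_cast [Nat.cast_sub (by omega : k ≤ m+1)]; ring
      rw [h1]
      have h2 : m + 1 - k = (m - k) + 1 := by omega
      rw [h2, pow_succ, Nat.factorial_succ]
      have h3 : (((m - k) + 1 : ℕ) : ℂ) = ((m - k : ℕ) : ℂ) + 1 := by push_cast; ring
      push_cast
      ring
    · have : k = m + 1 := by omega
      subst this
      simp

lemma prodKminus (k m : ℕ) (hk : k ≤ m) :
    ∏ j ∈ (Finset.range (m+1)).erase k, ((k : ℂ) - j)
      = (-1)^(m-k) * (k.factorial : ℂ) * ((m-k).factorial : ℂ) := by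
  have hsplit : (Finset.range (m+1)).erase k = Finset.range k ∪ Finset.Ico (k+1) (m+1) := by
    ext j
    simp only [Finset.mem_erase, Finset.mem_range, Finset.mem_union, Finset.mem_Ico]
    omega
  have hdisj : Disjoint (Finset.range k) (Finset.Ico (k+1) (m+1)) := by
    rw [Finset.disjoint_left]
    intro j hj hj'
    simp only [Finset.mem_range] at hj
    simp only [Finset.mem_Ico] at hj'
    omega
  rw [hsplit, Finset.prod_union hdisj, prodA1, prodA2 k m hk]
  ring

lemma prodAsc (k : ℕ) : ∀ n : ℕ, ∏ j ∈ Finset.range n, ((k : ℂ) + 1 + j)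
    = ((k+n).factorial : ℂ) / (k.factorial : ℂ) := by
  intro n
  induction n with
  | zero => simp [div_self, Nat.cast_ne_zero.2 (Nat.factorial_ne_zero k)]
  | succ n ih =>
    rw [Finset.prod_range_succ, ih]
    have h0 : (k.factorial : ℂ) ≠ 0 := Nat.cast_ne_zero.2 (Nat.factorial_ne_zero k)
    have h1 : (k + (n+1)).factorial = (k + n).factorial * (k + n + 1) := by
      rw [show k + (n+1) = (k+n) + 1 by ring, Nat.factorial_succ]; ring
    rw [h1]
    push_cast
    rw [div_mul_eq_mul_div]
    ring_nf

lemma prodKplus (k m : ℕ) (hk1 : 1 ≤ k) (hk : k ≤ m) :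
    ∏ j ∈ (Finset.range (m+1)).erase k, ((k : ℂ) + j)
      = ((m+k).factorial : ℂ) / (2 * (k.factorial : ℂ)) := by
  have hkmem : k ∈ Finset.range (m+1) := Finset.mem_range.2 (by omega)
  have htot : ∏ j ∈ Finset.range (m+1), ((k : ℂ) + j)
      = ((m+k).factorial : ℂ) / ((k-1).factorial : ℂ) := by
    have h := prodAsc (k-1) (m+1)
    have hc : ((k-1 : ℕ) : ℂ) + 1 = (k : ℂ) := by
      push_cast [Nat.cast_sub (by omega : 1 ≤ k)]; ring
    rw [show (k-1) + (m+1) = m + k by omega] at h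
    calc ∏ j ∈ Finset.range (m+1), ((k : ℂ) + j)
        = ∏ j ∈ Finset.range (m+1), (((k-1:ℕ) : ℂ) + 1 + j) :=
          Finset.prod_congr rfl (fun j _ => by rw [hc])
      _ = _ := h
  have herase := Finset.prod_erase_mul (Finset.range (m+1)) (fun j => ((k : ℂ) + j)) hkmem
  have hfk : (k.factorial : ℂ) = (k : ℂ) * ((k-1).factorial : ℂ) := by
    have h1 : k.factorial = k * (k-1).factorial := by
      conv_lhs => rw [show k = (k-1) + 1 by omega]
      rw [Nat.factorial_succ, show k - 1 + 1 = k by omega]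
    rw [h1]; push_cast; ring
  have hkne : (k : ℂ) ≠ 0 := Nat.cast_ne_zero.2 (by omega)
  have hfne : ((k-1).factorial : ℂ) ≠ 0 := Nat.cast_ne_zero.2 (Nat.factorial_ne_zero _)
  have h2k : ((k:ℂ) + k) ≠ 0 := by
    rw [← two_mul]
    exact mul_ne_zero two_ne_zero hkne
  rw [htot] at herase
  field_simp [hfk] at herase ⊢
  linear_combination herase + 2 * (∏ x ∈ (Finset.range (m + 1)).erase k, ((k:ℂ) + x)) * hfk

noncomputable def RInt (A B : ℝ) (f : ℂ → ℂ) : ℂ :=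
  (∫ x in (-A)..A, f ((x : ℂ) - I * B)) + I * (∫ t in (-B)..B, f ((A : ℂ) + I * t))
    - (∫ x in (-A)..A, f ((x : ℂ) + I * B)) - I * (∫ t in (-B)..B, f (-(A : ℂ) + I * t))

lemma RInt_eq_zero {A B ρ' : ℝ} (hB : |B| < ρ') {f : ℂ → ℂ}
    (hf : DifferentiableOn ℂ f {z : ℂ | |z.im| < ρ'}) : RInt A B f = 0 := by
  have key := Complex.integral_boundary_rect_eq_zero_of_differentiableOn f ⟨-A, -B⟩ ⟨A, B⟩ (by
    refine hf.mono ?_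
    intro ζ hζ
    rw [Complex.mem_reProdIm] at hζ
    have h2 : ζ.im ∈ Set.uIcc (-B) B := hζ.2
    rw [Set.mem_uIcc] at h2
    have hb1 : B ≤ |B| := le_abs_self B
    have hb2 : -|B| ≤ B := neg_abs_le B
    simp only [Set.mem_setOf_eq]
    rcases h2 with ⟨ha, hb⟩ | ⟨ha, hb⟩ <;> rw [abs_lt] <;> constructor <;> linarith)
  change (∫ x in (-A)..A, f (↑x + ↑(-B) * I)) - (∫ x in (-A)..A, f (↑x + ↑B * I))
      + I • (∫ t in (-B)..B, f (↑A + ↑t * I)) - I • (∫ t in (-B)..B, f (↑(-A) + ↑t * I)) = 0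
    at key
  rw [show (∫ x in (-A)..A, f (↑x + ↑(-B) * I)) = ∫ x in (-A)..A, f ((x : ℂ) - I * B) from
      intervalIntegral.integral_congr (fun x _ => by
        rw [show ((x : ℂ) + ↑(-B : ℝ) * I) = (x : ℂ) - I * B by push_cast; ring]),
    show (∫ x in (-A)..A, f (↑x + ↑B * I)) = ∫ x in (-A)..A, f ((x : ℂ) + I * B) from
      intervalIntegral.integral_congr (fun x _ => by rw [show ((x : ℂ) + ↑B * I) = (x : ℂ) + I * B by ring]),
    show (∫ t in (-B)..B, f (↑A + ↑t * I)) = ∫ t in (-B)..B, f ((A : ℂ) + I * t) from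
      intervalIntegral.integral_congr (fun t _ => by rw [show ((A : ℂ) + ↑t * I) = (A : ℂ) + I * t by ring]),
    show (∫ t in (-B)..B, f (↑(-A) + ↑t * I)) = ∫ t in (-B)..B, f (-(A : ℂ) + I * t) from
      intervalIntegral.integral_congr (fun t _ => by
        rw [show ((↑(-A : ℝ) : ℂ) + ↑t * I) = -(A : ℂ) + I * t by push_cast; ring]),
    smul_eq_mul, smul_eq_mul] at key
  rw [RInt]
  linear_combination key

lemma log_neg_of_im_pos {u : ℂ} (h : 0 < u.im) :
    Complex.log (-u) = Complex.log u - Real.pi * I := by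
  rw [Complex.log, Complex.log, norm_neg, arg_neg_eq_arg_sub_pi_of_im_pos h]
  push_cast
  ring

lemma log_neg_of_im_neg {u : ℂ} (h : u.im < 0) :
    Complex.log (-u) = Complex.log u + Real.pi * I := by
  rw [Complex.log, Complex.log, norm_neg, arg_neg_eq_arg_add_pi_of_im_neg h]
  push_cast
  ring

lemma RInt_sub_inv {A B p : ℝ} (hp : |p| < A) (hB : 0 < B) :
    RInt A B (fun z => (z - (p : ℂ))⁻¹) = 2 * Real.pi * I := by
  have hpA1 : p < A := lt_of_abs_lt hp
  have hpA2 : -A < p := neg_lt_of_abs_lt hp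
  have hApos : 0 < A - p := by linarith
  have hApos' : 0 < A + p := by linarith
  -- bottom edge
  have hbot : (∫ x in (-A)..A, ((x : ℂ) - I * B - p)⁻¹)
      = Complex.log ((A : ℂ) - I * B - p) - Complex.log ((-A : ℝ) - I * B - p) := by
    apply intervalIntegral.integral_eq_sub_of_hasDerivAt
    · intro x _
      have h1 : ((x : ℂ) - I * B - p) ∈ Complex.slitPlane := by
        rw [Complex.mem_slitPlane_iff]
        right
        simp [hB.ne']
      have h2 : HasDerivAt (fun z : ℂ => Complex.log (z - I * B - p)) (((x : ℂ) - I * B - p)⁻¹) x := by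
        simpa [Function.comp_def] using (Complex.hasDerivAt_log h1).comp (x : ℂ)
          (((hasDerivAt_id ((x : ℂ))).sub_const (I * B)).sub_const (p : ℂ))
      exact h2.comp_ofReal
    · apply Continuous.intervalIntegrable
      apply Continuous.inv₀
      · continuity
      · intro x
        intro hEq
        have := congrArg Complex.im hEq
        simp at this
        exact hB.ne' this
  -- right edge
  have hright : I * (∫ t in (-B)..B, ((A : ℂ) + I * t - p)⁻¹)
      = Complex.log ((A : ℂ) + I * B - p) - Complex.log ((A : ℂ) + I * (-B : ℝ) - p) := by
    rw [← intervalIntegral.integral_const_mul]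
    apply intervalIntegral.integral_eq_sub_of_hasDerivAt
    · intro t _
      have h1 : ((A : ℂ) + I * t - p) ∈ Complex.slitPlane := by
        rw [Complex.mem_slitPlane_iff]
        left
        simp [hApos]
      have h2 : HasDerivAt (fun z : ℂ => Complex.log ((A : ℂ) + I * z - p))
          (I * ((A : ℂ) + I * t - p)⁻¹) (t : ℂ) := by
        have h3 : HasDerivAt (fun z : ℂ => (A : ℂ) + I * z - p) I (t : ℂ) := by
          simpa using (((hasDerivAt_id ((t : ℂ))).const_mul I).const_add (A : ℂ)).sub_const (p : ℂ)
        simpa [mul_comm, Function.comp_def] using (Complex.hasDerivAt_log h1).comp (t : ℂ) h3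
      exact h2.comp_ofReal
    · apply Continuous.intervalIntegrable
      apply Continuous.mul continuous_const
      apply Continuous.inv₀
      · continuity
      · intro t
        intro hEq
        have := congrArg Complex.re hEq
        simp at this
        linarith
  -- top edge
  have htop : (∫ x in (-A)..A, ((x : ℂ) + I * B - p)⁻¹)
      = Complex.log ((A : ℂ) + I * B - p) - Complex.log ((-A : ℝ) + I * B - p) := by
    apply intervalIntegral.integral_eq_sub_of_hasDerivAt
    · intro x _
      have h1 : ((x : ℂ) + I * B - p) ∈ Complex.slitPlane := by
        rw [Complex.mem_slitPlane_iff]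
        right
        simp [hB.ne']
      have h2 : HasDerivAt (fun z : ℂ => Complex.log (z + I * B - p)) (((x : ℂ) + I * B - p)⁻¹) x := by
        simpa [Function.comp_def] using (Complex.hasDerivAt_log h1).comp (x : ℂ)
          (((hasDerivAt_id ((x : ℂ))).add_const (I * B)).sub_const (p : ℂ))
      exact h2.comp_ofReal
    · apply Continuous.intervalIntegrable
      apply Continuous.inv₀
      · continuity
      · intro x
        intro hEq
        have := congrArg Complex.im hEq
        simp at this
        exact hB.ne' this
  -- left edge
  have hleft : I * (∫ t in (-B)..B, (-(A : ℂ) + I * t - p)⁻¹)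
      = Complex.log ((A : ℂ) + p - I * B) - Complex.log ((A : ℂ) + p - I * (-B : ℝ)) := by
    rw [← intervalIntegral.integral_const_mul]
    apply intervalIntegral.integral_eq_sub_of_hasDerivAt
    · intro t _
      have h1 : ((A : ℂ) + p - I * t) ∈ Complex.slitPlane := by
        rw [Complex.mem_slitPlane_iff]
        left
        simp [hApos']
      have h2 : HasDerivAt (fun z : ℂ => Complex.log ((A : ℂ) + p - I * z))
          (I * (-(A : ℂ) + I * t - p)⁻¹) (t : ℂ) := by
        have h3 : HasDerivAt (fun z : ℂ => (A : ℂ) + p - I * z) (-I) (t : ℂ) := by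
          simpa using (((hasDerivAt_id ((t : ℂ))).const_mul I).const_sub ((A : ℂ) + p))
        have h4 := (Complex.hasDerivAt_log h1).comp (t : ℂ) h3
        have h5 : ((A : ℂ) + p - I * t)⁻¹ * (-I) = I * (-(A : ℂ) + I * t - p)⁻¹ := by
          rw [show (-(A : ℂ) + I * t - p) = -((A : ℂ) + p - I * t) by ring, inv_neg]
          ring
        simpa [h5, Function.comp_def] using h4
      exact h2.comp_ofReal
    · apply Continuous.intervalIntegrable
      apply Continuous.mul continuous_const
      apply Continuous.inv₀
      · continuity
      · intro t
        intro hEq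
        have h6 := congrArg Complex.re hEq
        simp at h6
        linarith
  -- assemble
  rw [RInt]
  rw [hbot, hright, htop, hleft]
  have e1 : ((-A : ℝ) : ℂ) - I * B - p = -((A : ℂ) + p + I * B) := by push_cast; ring
  have e2 : ((-A : ℝ) : ℂ) + I * B - p = -((A : ℂ) + p - I * B) := by push_cast; ring
  have e3 : ((A : ℂ) + I * ((-B : ℝ) : ℂ) - p) = (A : ℂ) - I * B - p := by push_cast; ring
  have e4 : ((A : ℂ) + p - I * ((-B : ℝ) : ℂ)) = (A : ℂ) + p + I * B := by push_cast; ring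
  rw [e1, e2, e3, e4]
  rw [log_neg_of_im_pos (by simp [hB]), log_neg_of_im_neg (by simp [hB])]
  ring

lemma RInt_sq_inv {A B : ℝ} (hA : 0 < A) (hB : 0 < B) :
    RInt A B (fun z => (z ^ 2)⁻¹) = 0 := by
  have hne : ∀ x : ℝ, ∀ s : ℝ, s ≠ 0 → ((x : ℂ) + I * s) ≠ 0 := by
    intro x s hs hEq
    have := congrArg Complex.im hEq
    simp at this
    exact hs this
  have hderiv : ∀ u : ℂ, u ≠ 0 → HasDerivAt (fun z : ℂ => -(z⁻¹)) ((u ^ 2)⁻¹) u := by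
    intro u hu
    have h := ((hasDerivAt_id u).inv hu).neg
    simpa using (hasDerivAt_inv hu).fun_neg
  have hbot : (∫ x in (-A)..A, (((x : ℂ) - I * B) ^ 2)⁻¹)
      = -((A : ℂ) - I * B)⁻¹ - -(((-A : ℝ) : ℂ) - I * B)⁻¹ := by
    apply intervalIntegral.integral_eq_sub_of_hasDerivAt
    · intro x _
      have h2 : HasDerivAt (fun z : ℂ => -((z - I * B)⁻¹)) ((((x : ℂ) - I * B) ^ 2)⁻¹) x := by
        have h0 : ((x : ℂ) - I * B) ≠ 0 := by
          have := hne x (-B) (by linarith)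
          intro hEq; apply this; rw [← hEq]; push_cast; ring
        simpa [Function.comp_def] using (hderiv _ h0).comp (x : ℂ) ((hasDerivAt_id ((x : ℂ))).sub_const (I * B))
      exact h2.comp_ofReal
    · apply Continuous.intervalIntegrable
      apply Continuous.inv₀
      · continuity
      · intro x
        apply pow_ne_zero
        have := hne x (-B) (by linarith)
        intro hEq; apply this; rw [← hEq]; push_cast; ring
  have htop : (∫ x in (-A)..A, (((x : ℂ) + I * B) ^ 2)⁻¹)
      = -((A : ℂ) + I * B)⁻¹ - -(((-A : ℝ) : ℂ) + I * B)⁻¹ := by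
    apply intervalIntegral.integral_eq_sub_of_hasDerivAt
    · intro x _
      have h2 : HasDerivAt (fun z : ℂ => -((z + I * B)⁻¹)) ((((x : ℂ) + I * B) ^ 2)⁻¹) x := by
        have h0 : ((x : ℂ) + I * B) ≠ 0 := hne x B (by linarith)
        simpa [Function.comp_def] using (hderiv _ h0).comp (x : ℂ) ((hasDerivAt_id ((x : ℂ))).add_const (I * B))
      exact h2.comp_ofReal
    · apply Continuous.intervalIntegrable
      apply Continuous.inv₀
      · continuity
      · intro x
        exact pow_ne_zero _ (hne x B (by linarith))
  have hvert : ∀ c : ℝ, c ≠ 0 → I * (∫ t in (-B)..B, (((c : ℂ) + I * t) ^ 2)⁻¹)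
      = -((c : ℂ) + I * B)⁻¹ - -((c : ℂ) + I * ((-B : ℝ) : ℂ))⁻¹ := by
    intro c hc
    rw [← intervalIntegral.integral_const_mul]
    apply intervalIntegral.integral_eq_sub_of_hasDerivAt
    · intro t _
      have h0 : ((c : ℂ) + I * t) ≠ 0 := by
        intro hEq
        have := congrArg Complex.re hEq
        simp at this
        exact hc this
      have h3 : HasDerivAt (fun z : ℂ => (c : ℂ) + I * z) I (t : ℂ) := by
        simpa using ((hasDerivAt_id ((t : ℂ))).const_mul I).const_add (c : ℂ)
      have h2 : HasDerivAt (fun z : ℂ => -(((c : ℂ) + I * z)⁻¹))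
          (I * (((c : ℂ) + I * t) ^ 2)⁻¹) (t : ℂ) := by
        simpa [mul_comm, Function.comp_def] using (hderiv _ h0).comp (t : ℂ) h3
      exact h2.comp_ofReal
    · apply Continuous.intervalIntegrable
      apply Continuous.mul continuous_const
      apply Continuous.inv₀
      · continuity
      · intro t
        apply pow_ne_zero
        intro hEq
        have := congrArg Complex.re hEq
        simp at this
        exact hc this
  have hr := hvert A hA.ne'
  have hl := hvert (-A) (by linarith)
  rw [RInt, hbot, htop]
  rw [show (∫ t in (-B)..B, (fun z => (z ^ 2)⁻¹) ((A : ℂ) + I * t)) = ∫ t in (-B)..B, (((A : ℂ) + I * t) ^ 2)⁻¹ from rfl]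
  rw [show (∫ t in (-B)..B, (fun z => (z ^ 2)⁻¹) (-(A : ℂ) + I * t)) = ∫ t in (-B)..B, ((((-A : ℝ) : ℂ) + I * t) ^ 2)⁻¹ from by
    apply intervalIntegral.integral_congr
    intro t _
    norm_num]
  rw [hr, hl]
  have e5 : ((A : ℂ) + I * ((-B : ℝ) : ℂ)) = (A : ℂ) - I * B := by push_cast; ring
  have e6 : (((-A : ℝ) : ℂ) + I * ((-B : ℝ) : ℂ)) = ((-A : ℝ) : ℂ) - I * B := by push_cast; ring
  rw [e5, e6]
  ring


def Edges (A B : ℝ) : Set ℂ :=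
  {z : ℂ | |z.re| ≤ A ∧ |z.im| ≤ B ∧ (|z.im| = B ∨ |z.re| = A)}

lemma edges_subset_strip {A B ρ' : ℝ} (hB : B < ρ') : Edges A B ⊆ {z : ℂ | |z.im| < ρ'} := by
  intro z hz
  exact lt_of_le_of_lt hz.2.1 hB

lemma ofReal_not_mem_edges {A B p : ℝ} (hp : |p| < A) (hB : 0 < B) : (p : ℂ) ∉ Edges A B := by
  intro hmem
  obtain ⟨h1, h2, h3⟩ := hmem
  simp only [Complex.ofReal_re, Complex.ofReal_im, abs_zero] at h1 h2 h3
  rcases h3 with h3 | h3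
  · exact hB.ne h3
  · exact hp.ne h3

lemma mem_edges_bot {A B : ℝ} (hA : 0 ≤ A) (hB : 0 ≤ B) {x : ℝ} (hx : x ∈ Set.uIcc (-A) A) :
    ((x : ℂ) - I * B) ∈ Edges A B := by
  have hx' : |x| ≤ A := by
    rw [Set.uIcc_of_le (by linarith : -A ≤ A)] at hx
    rw [abs_le]; exact hx
  refine ⟨by simpa using hx', ?_, ?_⟩ <;> simp [_root_.abs_of_nonneg hB]

lemma mem_edges_top {A B : ℝ} (hA : 0 ≤ A) (hB : 0 ≤ B) {x : ℝ} (hx : x ∈ Set.uIcc (-A) A) :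
    ((x : ℂ) + I * B) ∈ Edges A B := by
  have hx' : |x| ≤ A := by
    rw [Set.uIcc_of_le (by linarith : -A ≤ A)] at hx
    rw [abs_le]; exact hx
  refine ⟨by simpa using hx', ?_, ?_⟩ <;> simp [_root_.abs_of_nonneg hB]

lemma mem_edges_right {A B : ℝ} (hA : 0 ≤ A) (hB : 0 ≤ B) {t : ℝ} (ht : t ∈ Set.uIcc (-B) B) :
    ((A : ℂ) + I * t) ∈ Edges A B := by
  have ht' : |t| ≤ B := by
    rw [Set.uIcc_of_le (by linarith : -B ≤ B)] at ht
    rw [abs_le]; exact ht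
  refine ⟨?_, by simpa using ht', ?_⟩ <;> simp [_root_.abs_of_nonneg hA]

lemma mem_edges_left {A B : ℝ} (hA : 0 ≤ A) (hB : 0 ≤ B) {t : ℝ} (ht : t ∈ Set.uIcc (-B) B) :
    (-(A : ℂ) + I * t) ∈ Edges A B := by
  have ht' : |t| ≤ B := by
    rw [Set.uIcc_of_le (by linarith : -B ≤ B)] at ht
    rw [abs_le]; exact ht
  refine ⟨?_, by simpa using ht', ?_⟩ <;> simp [_root_.abs_of_nonneg hA]

lemma edge_integrable_bot {A B : ℝ} (hA : 0 ≤ A) (hB : 0 ≤ B) {f : ℂ → ℂ}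
    (hf : ContinuousOn f (Edges A B)) :
    IntervalIntegrable (fun x : ℝ => f ((x : ℂ) - I * B)) MeasureTheory.volume (-A) A := by
  apply ContinuousOn.intervalIntegrable
  apply hf.comp ((Complex.continuous_ofReal.sub continuous_const).continuousOn)
  intro x hx
  exact mem_edges_bot hA hB hx

lemma edge_integrable_top {A B : ℝ} (hA : 0 ≤ A) (hB : 0 ≤ B) {f : ℂ → ℂ}
    (hf : ContinuousOn f (Edges A B)) :
    IntervalIntegrable (fun x : ℝ => f ((x : ℂ) + I * B)) MeasureTheory.volume (-A) A := by
  apply ContinuousOn.intervalIntegrable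
  apply hf.comp ((Complex.continuous_ofReal.add continuous_const).continuousOn)
  · intro x hx
    exact mem_edges_top hA hB hx

lemma edge_integrable_right {A B : ℝ} (hA : 0 ≤ A) (hB : 0 ≤ B) {f : ℂ → ℂ}
    (hf : ContinuousOn f (Edges A B)) :
    IntervalIntegrable (fun t : ℝ => f ((A : ℂ) + I * t)) MeasureTheory.volume (-B) B := by
  apply ContinuousOn.intervalIntegrable
  apply hf.comp ((continuous_const.add (continuous_const.mul Complex.continuous_ofReal)).continuousOn)
  intro t ht
  exact mem_edges_right hA hB ht

lemma edge_integrable_left {A B : ℝ} (hA : 0 ≤ A) (hB : 0 ≤ B) {f : ℂ → ℂ}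
    (hf : ContinuousOn f (Edges A B)) :
    IntervalIntegrable (fun t : ℝ => f (-(A : ℂ) + I * t)) MeasureTheory.volume (-B) B := by
  apply ContinuousOn.intervalIntegrable
  apply hf.comp ((continuous_const.add (continuous_const.mul Complex.continuous_ofReal)).continuousOn)
  intro t ht
  exact mem_edges_left hA hB ht

lemma RInt_congr {A B : ℝ} (hA : 0 ≤ A) (hB : 0 ≤ B) {f g : ℂ → ℂ}
    (h : ∀ z ∈ Edges A B, f z = g z) : RInt A B f = RInt A B g := by
  unfold RInt
  rw [intervalIntegral.integral_congr (g := fun x : ℝ => g ((x : ℂ) - I * B))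
      (fun x hx => h _ (mem_edges_bot hA hB hx)),
    intervalIntegral.integral_congr (g := fun x : ℝ => g ((x : ℂ) + I * B))
      (fun x hx => h _ (mem_edges_top hA hB hx)),
    intervalIntegral.integral_congr (g := fun t : ℝ => g ((A : ℂ) + I * t))
      (fun t ht => h _ (mem_edges_right hA hB ht)),
    intervalIntegral.integral_congr (g := fun t : ℝ => g (-(A : ℂ) + I * t))
      (fun t ht => h _ (mem_edges_left hA hB ht))]

lemma RInt_add {A B : ℝ} (hA : 0 ≤ A) (hB : 0 ≤ B) {f g : ℂ → ℂ}
    (hf : ContinuousOn f (Edges A B)) (hg : ContinuousOn g (Edges A B)) :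
    RInt A B (fun z => f z + g z) = RInt A B f + RInt A B g := by
  unfold RInt
  rw [intervalIntegral.integral_add (edge_integrable_bot hA hB hf) (edge_integrable_bot hA hB hg),
    intervalIntegral.integral_add (edge_integrable_top hA hB hf) (edge_integrable_top hA hB hg),
    intervalIntegral.integral_add (edge_integrable_right hA hB hf) (edge_integrable_right hA hB hg),
    intervalIntegral.integral_add (edge_integrable_left hA hB hf) (edge_integrable_left hA hB hg)]
  ring

lemma RInt_const_mul {A B : ℝ} (c : ℂ) (f : ℂ → ℂ) :
    RInt A B (fun z => c * f z) = c * RInt A B f := by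
  unfold RInt
  rw [intervalIntegral.integral_const_mul, intervalIntegral.integral_const_mul,
    intervalIntegral.integral_const_mul, intervalIntegral.integral_const_mul]
  ring

lemma RInt_sum {A B : ℝ} (hA : 0 ≤ A) (hB : 0 ≤ B) {ι : Type*} (s : Finset ι) (F : ι → ℂ → ℂ)
    (hF : ∀ k ∈ s, ContinuousOn (F k) (Edges A B)) :
    RInt A B (fun z => ∑ k ∈ s, F k z) = ∑ k ∈ s, RInt A B (F k) := by
  unfold RInt
  rw [show (∫ x in (-A)..A, (fun z => ∑ k ∈ s, F k z) ((x : ℂ) - I * B))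
        = ∑ k ∈ s, ∫ x in (-A)..A, F k ((x : ℂ) - I * B) from
      intervalIntegral.integral_finset_sum (fun k hk => edge_integrable_bot hA hB (hF k hk)),
    show (∫ x in (-A)..A, (fun z => ∑ k ∈ s, F k z) ((x : ℂ) + I * B))
        = ∑ k ∈ s, ∫ x in (-A)..A, F k ((x : ℂ) + I * B) from
      intervalIntegral.integral_finset_sum (fun k hk => edge_integrable_top hA hB (hF k hk)),
    show (∫ t in (-B)..B, (fun z => ∑ k ∈ s, F k z) ((A : ℂ) + I * t))
        = ∑ k ∈ s, ∫ t in (-B)..B, F k ((A : ℂ) + I * t) from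
      intervalIntegral.integral_finset_sum (fun k hk => edge_integrable_right hA hB (hF k hk)),
    show (∫ t in (-B)..B, (fun z => ∑ k ∈ s, F k z) (-(A : ℂ) + I * t))
        = ∑ k ∈ s, ∫ t in (-B)..B, F k (-(A : ℂ) + I * t) from
      intervalIntegral.integral_finset_sum (fun k hk => edge_integrable_left hA hB (hF k hk)),
    Finset.mul_sum, Finset.mul_sum, ← Finset.sum_add_distrib, ← Finset.sum_sub_distrib,
    ← Finset.sum_sub_distrib]

lemma isOpen_strip (ρ' : ℝ) : IsOpen {z : ℂ | |z.im| < ρ'} :=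
  isOpen_lt (continuous_abs.comp Complex.continuous_im) continuous_const

lemma strip_mem_nhds_ofReal {ρ' : ℝ} (h : 0 < ρ') (p : ℝ) :
    {z : ℂ | |z.im| < ρ'} ∈ nhds (p : ℂ) :=
  (isOpen_strip ρ').mem_nhds (by simp [h])

lemma continuousOn_dslope_edges {A B ρ' p : ℝ} {y : ℂ → ℂ}
    (hy : DifferentiableOn ℂ y {z : ℂ | |z.im| < ρ'}) (hp : |p| < A) (hB : 0 < B)
    (hBρ' : B < ρ') : ContinuousOn (dslope y (p : ℂ)) (Edges A B) := by
  intro z hz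
  have hzp : z ≠ (p : ℂ) := ne_of_mem_of_not_mem hz (ofReal_not_mem_edges hp hB)
  have hz' : |z.im| < ρ' := edges_subset_strip hBρ' hz
  have hyc : ContinuousAt y z :=
    (hy.differentiableAt ((isOpen_strip ρ').mem_nhds hz')).continuousAt
  exact ((continuousAt_dslope_of_ne hzp).2 hyc).continuousWithinAt

lemma continuousOn_y_edges {A B ρ' : ℝ} {y : ℂ → ℂ}
    (hy : DifferentiableOn ℂ y {z : ℂ | |z.im| < ρ'}) (hBρ' : B < ρ') :
    ContinuousOn y (Edges A B) :=
  hy.continuousOn.mono (edges_subset_strip hBρ')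

lemma continuousOn_inv_sub_edges {A B p : ℝ} (hp : |p| < A) (hB : 0 < B) :
    ContinuousOn (fun z : ℂ => (z - (p : ℂ))⁻¹) (Edges A B) := by
  apply ContinuousOn.inv₀ ((continuous_id.sub continuous_const).continuousOn)
  intro z hz
  exact sub_ne_zero.2 (ne_of_mem_of_not_mem hz (ofReal_not_mem_edges hp hB))

lemma continuousOn_inv_sq_edges {A B : ℝ} (hA : 0 < A) (hB : 0 < B) :
    ContinuousOn (fun z : ℂ => (z ^ 2)⁻¹) (Edges A B) := by
  apply ContinuousOn.inv₀ ((continuous_id.pow 2).continuousOn)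
  intro z hz
  apply pow_ne_zero
  have h0 : ((0 : ℝ) : ℂ) ∉ Edges A B := ofReal_not_mem_edges (by simpa using hA) hB
  simpa using ne_of_mem_of_not_mem hz h0

lemma RInt_cauchy {A B ρ' p : ℝ} {y : ℂ → ℂ}
    (hy : DifferentiableOn ℂ y {z : ℂ | |z.im| < ρ'}) (hp : |p| < A) (hB : 0 < B)
    (hBρ' : B < ρ') :
    RInt A B (fun z => y z * (z - (p : ℂ))⁻¹) = 2 * Real.pi * I * y p := by
  have hρ'0 : 0 < ρ' := lt_trans hB hBρ'
  have hA : 0 ≤ A := le_of_lt (lt_of_le_of_lt (abs_nonneg p) hp)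
  have hds0 : RInt A B (dslope y (p : ℂ)) = 0 :=
    RInt_eq_zero (by rwa [abs_of_pos hB])
      ((Complex.differentiableOn_dslope (strip_mem_nhds_ofReal hρ'0 p)).2 hy)
  have hcong : ∀ z ∈ Edges A B,
      y z * (z - (p : ℂ))⁻¹ = dslope y (p : ℂ) z + y p * (z - (p : ℂ))⁻¹ := by
    intro z hz
    have hzp : z ≠ (p : ℂ) := ne_of_mem_of_not_mem hz (ofReal_not_mem_edges hp hB)
    rw [dslope_of_ne _ hzp, slope_def_field]
    have h0 : z - (p : ℂ) ≠ 0 := sub_ne_zero.2 hzp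
    field_simp
    ring
  rw [RInt_congr hA hB.le hcong,
    RInt_add hA hB.le (continuousOn_dslope_edges hy hp hB hBρ')
      (continuousOn_const.fun_mul (continuousOn_inv_sub_edges hp hB)),
    hds0, RInt_const_mul, RInt_sub_inv hp hB]
  ring

lemma RInt_cauchy_deriv {A B ρ' : ℝ} {y : ℂ → ℂ}
    (hy : DifferentiableOn ℂ y {z : ℂ | |z.im| < ρ'}) (hA : 0 < A) (hB : 0 < B)
    (hBρ' : B < ρ') :
    RInt A B (fun z => y z * (z ^ 2)⁻¹) = 2 * Real.pi * I * deriv y 0 := by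
  have hρ'0 : 0 < ρ' := lt_trans hB hBρ'
  have hnhds : {z : ℂ | |z.im| < ρ'} ∈ nhds (0 : ℂ) := by
    simpa using strip_mem_nhds_ofReal hρ'0 0
  have hds : DifferentiableOn ℂ (dslope y 0) {z : ℂ | |z.im| < ρ'} :=
    (Complex.differentiableOn_dslope hnhds).2 hy
  have hg : DifferentiableOn ℂ (dslope (dslope y 0) 0) {z : ℂ | |z.im| < ρ'} :=
    (Complex.differentiableOn_dslope hnhds).2 hds
  have hg0 : RInt A B (dslope (dslope y 0) 0) = 0 :=
    RInt_eq_zero (by rwa [abs_of_pos hB]) hg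
  have hgcont : ContinuousOn (dslope (dslope y 0) 0) (Edges A B) := by
    intro z hz
    have hzp : z ≠ (0 : ℂ) := by
      have h0 : ((0 : ℝ) : ℂ) ∉ Edges A B := ofReal_not_mem_edges (by simpa using hA) hB
      simpa using ne_of_mem_of_not_mem hz h0
    have hz' : |z.im| < ρ' := edges_subset_strip hBρ' hz
    have hyc : ContinuousAt y z :=
      (hy.differentiableAt ((isOpen_strip ρ').mem_nhds hz')).continuousAt
    exact ((continuousAt_dslope_of_ne hzp).2
      ((continuousAt_dslope_of_ne hzp).2 hyc)).continuousWithinAt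
  have hinv : RInt A B (fun z : ℂ => z⁻¹) = 2 * Real.pi * I := by
    rw [show (fun z : ℂ => z⁻¹) = (fun z : ℂ => (z - ((0 : ℝ) : ℂ))⁻¹) by funext z; simp]
    exact RInt_sub_inv (by simpa using hA) hB
  have hinvcont : ContinuousOn (fun z : ℂ => z⁻¹) (Edges A B) := by
    rw [show (fun z : ℂ => z⁻¹) = (fun z : ℂ => (z - ((0 : ℝ) : ℂ))⁻¹) by funext z; simp]
    exact continuousOn_inv_sub_edges (by simpa using hA) hB
  have hcong : ∀ z ∈ Edges A B,
      y z * (z ^ 2)⁻¹ = (dslope (dslope y 0) 0 z + deriv y 0 * z⁻¹) + y 0 * (z ^ 2)⁻¹ := by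
    intro z hz
    have hzp : z ≠ (0 : ℂ) := by
      have h0 : ((0 : ℝ) : ℂ) ∉ Edges A B := ofReal_not_mem_edges (by simpa using hA) hB
      simpa using ne_of_mem_of_not_mem hz h0
    rw [dslope_of_ne _ hzp, slope_def_field, dslope_same, dslope_of_ne _ hzp, slope_def_field]
    field_simp
    ring
  rw [RInt_congr hA.le hB.le hcong,
    RInt_add hA.le hB.le
      (hgcont.fun_add (continuousOn_const.fun_mul hinvcont))
      (continuousOn_const.fun_mul (continuousOn_inv_sq_edges hA hB)),
    RInt_add hA.le hB.le hgcont (continuousOn_const.fun_mul hinvcont),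
    hg0, RInt_const_mul, RInt_const_mul, hinv, RInt_sq_inv hA hB]
  ring

lemma edges_sub_ne {A B p : ℝ} (hp : |p| < A) (hB : 0 < B) {z : ℂ} (hz : z ∈ Edges A B) :
    z - (p : ℂ) ≠ 0 :=
  sub_ne_zero.2 (ne_of_mem_of_not_mem hz (ofReal_not_mem_edges hp hB))

lemma edges_sq_sub_ne {A B p : ℝ} (hp : |p| < A) (hB : 0 < B) {z : ℂ} (hz : z ∈ Edges A B) :
    z ^ 2 - ((p : ℂ)) ^ 2 ≠ 0 := by
  intro hEq
  have hfac : (z - p) * (z + p) = 0 := by linear_combination hEq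
  rcases mul_eq_zero.1 hfac with h1 | h1
  · exact edges_sub_ne hp hB hz h1
  · apply edges_sub_ne (p := -p) (by rwa [abs_neg]) hB hz
    push_cast
    linear_combination h1

lemma inj_sq_mul (h : ℝ) (hh : 0 < h) (m : ℕ) :
    Set.InjOn (fun j : ℕ => (((j : ℕ) : ℂ) * h) ^ 2) ((Finset.range (m+1)) : Set ℕ) := by
  intro j _ k _ hEq
  simp only at hEq
  have hR : ((j : ℝ) * h) ^ 2 = ((k : ℝ) * h) ^ 2 := by
    have : ((((j : ℝ) * h) ^ 2 : ℝ) : ℂ) = ((((k : ℝ) * h) ^ 2 : ℝ) : ℂ) := by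
      push_cast
      push_cast at hEq
      linear_combination hEq
    exact_mod_cast this
  have hj0 : (0:ℝ) ≤ (j : ℝ) * h := by positivity
  have hk0 : (0:ℝ) ≤ (k : ℝ) * h := by positivity
  have hjk : (j : ℝ) * h = (k : ℝ) * h := by
    rcases sq_eq_sq_iff_eq_or_eq_neg.1 hR with h1 | h1
    · exact h1
    · have h2 : (j : ℝ) * h = 0 := le_antisymm (by linarith) hj0
      have h3 : (k : ℝ) * h = 0 := by linarith
      rw [h2, h3]
  have : (j : ℝ) = k := mul_right_cancel₀ hh.ne' hjk
  exact_mod_cast this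

lemma range_succ_eq_insert_Icc (m : ℕ) : Finset.range (m+1) = insert 0 (Finset.Icc 1 m) := by
  ext j
  simp only [Finset.mem_range, Finset.mem_insert, Finset.mem_Icc]
  omega

lemma erase_range_zero (m : ℕ) : (Finset.range (m+1)).erase 0 = Finset.Icc 1 m := by
  ext j
  simp only [Finset.mem_erase, Finset.mem_range, Finset.mem_Icc]
  omega

lemma prod_P_zero (m : ℕ) (h : ℝ) :
    ∏ j ∈ (Finset.range (m+1)).erase 0, ((((0:ℕ) : ℂ) * h) ^ 2 - ((j : ℂ) * h) ^ 2)
      = (-1) ^ m * (m.factorial : ℂ) ^ 2 * (h : ℂ) ^ (2*m) := by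
  rw [erase_range_zero]
  have hcongr : ∀ j ∈ Finset.Icc 1 m, (((0:ℕ) : ℂ) * h) ^ 2 - ((j : ℂ) * h) ^ 2
      = (-1) * ((j : ℂ) * h) ^ 2 := by
    intro j _
    push_cast
    ring
  rw [Finset.prod_congr rfl hcongr, Finset.prod_mul_distrib, Finset.prod_pow,
    Finset.prod_mul_distrib, Finset.prod_const, Finset.prod_const]
  have hcard : (Finset.Icc 1 m).card = m := by rw [Nat.card_Icc]; omega
  have hfact : ∏ j ∈ Finset.Icc 1 m, (j : ℂ) = (m.factorial : ℂ) := by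
    rw [← Nat.cast_prod]
    congr 1
    rw [← Finset.Ico_add_one_right_eq_Icc]
    exact Finset.prod_Ico_id_eq_factorial m
  rw [hcard, hfact, pow_mul]
  ring

lemma prod_P_pos (m k : ℕ) (hk1 : 1 ≤ k) (hk : k ≤ m) (h : ℝ) :
    ∏ j ∈ (Finset.range (m+1)).erase k, (((k : ℂ) * h) ^ 2 - ((j : ℂ) * h) ^ 2)
      = (-1) ^ (m-k) * ((m-k).factorial : ℂ) * ((m+k).factorial : ℂ) / 2 * (h : ℂ) ^ (2*m) := by
  have hcongr : ∀ j ∈ (Finset.range (m+1)).erase k,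
      ((k : ℂ) * h) ^ 2 - ((j : ℂ) * h) ^ 2 = (((k : ℂ) - j) * ((k : ℂ) + j)) * (h : ℂ) ^ 2 := by
    intro j _
    ring
  have hcard : ((Finset.range (m+1)).erase k).card = m := by
    rw [Finset.card_erase_of_mem (Finset.mem_range.2 (by omega)), Finset.card_range]
    omega
  rw [Finset.prod_congr rfl hcongr, Finset.prod_mul_distrib, Finset.prod_mul_distrib,
    Finset.prod_const, hcard, prodKminus k m hk, prodKplus k m hk1 hk]
  have hkfne : (k.factorial : ℂ) ≠ 0 := Nat.cast_ne_zero.2 (Nat.factorial_ne_zero k)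
  field_simp
  rw [← pow_mul]

lemma coeff_zero (m : ℕ) {h : ℝ} (hh : h ≠ 0) :
    ((-1:ℂ))^(m+1) * (m.factorial : ℂ)^2 * (h : ℂ)^(2*m)
      * ((-1:ℂ)^m * (m.factorial : ℂ)^2 * (h : ℂ)^(2*m))⁻¹ = -1 := by
  have h1 : ((-1:ℂ))^m ≠ 0 := pow_ne_zero _ (by norm_num)
  have h2 : (m.factorial : ℂ) ≠ 0 := Nat.cast_ne_zero.2 (Nat.factorial_ne_zero m)
  have h3 : (h : ℂ)^(2*m) ≠ 0 := pow_ne_zero _ (Complex.ofReal_ne_zero.2 hh)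
  rw [pow_succ]
  field_simp

lemma coeff_pos (m k : ℕ) (hk1 : 1 ≤ k) (hk : k ≤ m) {h : ℝ} (hh : 0 < h) :
    ((-1:ℂ))^(m+1) * (m.factorial : ℂ)^2 * (h : ℂ)^(2*m)
      * ((-1:ℂ)^(m-k) * ((m-k).factorial : ℂ) * ((m+k).factorial : ℂ) / 2 * (h : ℂ)^(2*m))⁻¹
      * (2*(k:ℂ)*h)⁻¹
    = ((-1:ℂ)^(k+1) * (m.factorial : ℂ)^2)
        / ((k:ℂ) * h * ((m-k).factorial : ℂ) * ((m+k).factorial : ℂ)) := by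
  have hsign : ((-1:ℂ))^(m+1) = (-1:ℂ)^(k+1) * (-1:ℂ)^(m-k) := by
    rw [← pow_add]
    congr 1
    omega
  have h1 : ((-1:ℂ))^(m-k) ≠ 0 := pow_ne_zero _ (by norm_num)
  have h1' : ((-1:ℂ))^(k+1) ≠ 0 := pow_ne_zero _ (by norm_num)
  have h2 : (m.factorial : ℂ) ≠ 0 := Nat.cast_ne_zero.2 (Nat.factorial_ne_zero m)
  have h2a : ((m-k).factorial : ℂ) ≠ 0 := Nat.cast_ne_zero.2 (Nat.factorial_ne_zero _)
  have h2b : ((m+k).factorial : ℂ) ≠ 0 := Nat.cast_ne_zero.2 (Nat.factorial_ne_zero _)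
  have h3 : (h : ℂ)^(2*m) ≠ 0 := pow_ne_zero _ (Complex.ofReal_ne_zero.2 hh.ne')
  have h4 : (h : ℂ) ≠ 0 := Complex.ofReal_ne_zero.2 hh.ne'
  have h5 : (k : ℂ) ≠ 0 := Nat.cast_ne_zero.2 (by omega)
  rw [hsign]
  field_simp

/-- Contour-integral representation of the central-difference error:
`D_m y(0) − y'(0) = (1/(2πi)) ∮_γ K_m(z) y(z) dz`, where `γ` is the counterclockwise
boundary of the rectangle `[-mh-ρ, mh+ρ] × [-ρ, ρ]` and
`K_m(z) = (-1)^{m+1}(m!)² h^{2m}/(z²(z²-h²)⋯(z²-(mh)²))`. -/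
theorem central_difference_error_contour_integral
    (ρ ρ' h : ℝ) (hρ : 0 < ρ) (hρ' : ρ < ρ') (hh : 0 < h) (m : ℕ) (hm : 1 ≤ m)
    (y : ℂ → ℂ)
    (hy : DifferentiableOn ℂ y {z : ℂ | |z.im| < ρ'})
    (M : ℝ) (hbd : ∀ z : ℂ, |z.im| ≤ ρ → ‖y z‖ ≤ M) :
    (∑ j ∈ Finset.Icc 1 m,
        ((-1 : ℂ) ^ (j + 1) * (m.factorial : ℂ) ^ 2) /
            ((j : ℂ) * h * ((m - j).factorial : ℂ) * ((m + j).factorial : ℂ)) *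
          (y ((j : ℂ) * h) - y (-((j : ℂ) * h)))) - deriv y 0
      = (1 / (2 * Real.pi * I)) *
        (let K : ℂ → ℂ := fun z =>
            ((-1 : ℂ) ^ (m + 1) * (m.factorial : ℂ) ^ 2 * (h : ℂ) ^ (2 * m)) /
              (z ^ 2 * ∏ j ∈ Finset.Icc 1 m, (z ^ 2 - ((j : ℂ) * h) ^ 2));
         let a : ℝ := m * h + ρ;
         (∫ x in (-a)..a, K ((x : ℂ) - I * ρ) * y ((x : ℂ) - I * ρ))
           + I * (∫ t in (-ρ)..ρ, K ((a : ℂ) + I * t) * y ((a : ℂ) + I * t))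
           - (∫ x in (-a)..a, K ((x : ℂ) + I * ρ) * y ((x : ℂ) + I * ρ))
           - I * (∫ t in (-ρ)..ρ, K (-(a : ℂ) + I * t) * y (-(a : ℂ) + I * t))) := by
  show _ = (1 / (2 * Real.pi * I)) * RInt ((m : ℝ) * h + ρ) ρ
    (fun z => ((-1 : ℂ) ^ (m + 1) * (m.factorial : ℂ) ^ 2 * (h : ℂ) ^ (2 * m)) /
        (z ^ 2 * ∏ j ∈ Finset.Icc 1 m, (z ^ 2 - ((j : ℂ) * h) ^ 2)) * y z)
  have hA0 : (0 : ℝ) < (m : ℝ) * h + ρ := by positivity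
  have hjh : ∀ j : ℕ, j ≤ m → |(j : ℝ) * h| < (m : ℝ) * h + ρ := by
    intro j hj
    rw [_root_.abs_of_nonneg (by positivity)]
    have hjm : (j : ℝ) ≤ m := Nat.cast_le.2 hj
    nlinarith
  set P : ℕ → ℂ :=
    fun k => ∏ j ∈ (Finset.range (m+1)).erase k, (((k : ℂ) * h) ^ 2 - ((j : ℂ) * h) ^ 2) with hPdef
  -- pointwise partial fraction decomposition on the edges
  have hKy : ∀ z ∈ Edges ((m : ℝ) * h + ρ) ρ,
      ((-1 : ℂ) ^ (m + 1) * (m.factorial : ℂ) ^ 2 * (h : ℂ) ^ (2 * m)) /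
          (z ^ 2 * ∏ j ∈ Finset.Icc 1 m, (z ^ 2 - ((j : ℂ) * h) ^ 2)) * y z
        = ∑ k ∈ Finset.range (m+1),
            (((-1 : ℂ) ^ (m + 1) * (m.factorial : ℂ) ^ 2 * (h : ℂ) ^ (2 * m)) * (P k)⁻¹)
              * (y z * (z ^ 2 - ((k : ℂ) * h) ^ 2)⁻¹) := by
    intro z hz
    have hne : ∀ j ∈ Finset.range (m+1), z ^ 2 ≠ ((fun j : ℕ => (((j : ℕ) : ℂ) * h) ^ 2) j) := by
      intro j hj
      have hj' : j ≤ m := by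
        have := Finset.mem_range.1 hj
        omega
      have hne' := edges_sq_sub_ne (p := (j : ℝ) * h) (hjh j hj') hρ hz
      intro hEq
      apply hne'
      push_cast
      push_cast at hEq
      linear_combination hEq
    have hpf := pfrac (Finset.range (m+1)) ⟨0, Finset.mem_range.2 (by omega)⟩
      (fun j : ℕ => (((j : ℕ) : ℂ) * h) ^ 2) (inj_sq_mul h hh m) (z ^ 2) hne
    have hprod : ∏ j ∈ Finset.range (m+1), (z ^ 2 - ((j : ℂ) * h) ^ 2)
        = z ^ 2 * ∏ j ∈ Finset.Icc 1 m, (z ^ 2 - ((j : ℂ) * h) ^ 2) := by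
      rw [range_succ_eq_insert_Icc, Finset.prod_insert (by simp)]
      norm_num
    rw [div_eq_mul_inv, ← hprod]
    rw [hpf, Finset.mul_sum, Finset.sum_mul]
    apply Finset.sum_congr rfl
    intro k _
    rw [mul_inv]
    ring
  have hcont : ∀ k ∈ Finset.range (m+1), ContinuousOn
      (fun z => (((-1 : ℂ) ^ (m + 1) * (m.factorial : ℂ) ^ 2 * (h : ℂ) ^ (2 * m)) * (P k)⁻¹)
        * (y z * (z ^ 2 - ((k : ℂ) * h) ^ 2)⁻¹)) (Edges ((m : ℝ) * h + ρ) ρ) := by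
    intro k hk
    have hk' : k ≤ m := by
      have := Finset.mem_range.1 hk
      omega
    apply continuousOn_const.mul
    apply (continuousOn_y_edges hy hρ').mul
    apply ContinuousOn.inv₀ (Continuous.continuousOn (by continuity))
    intro z hz
    have hne' := edges_sq_sub_ne (p := (k : ℝ) * h) (hjh k hk') hρ hz
    intro hEq
    apply hne'
    push_cast
    push_cast at hEq
    linear_combination hEq
  have step1 : RInt ((m : ℝ) * h + ρ) ρ
      (fun z => ((-1 : ℂ) ^ (m + 1) * (m.factorial : ℂ) ^ 2 * (h : ℂ) ^ (2 * m)) /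
          (z ^ 2 * ∏ j ∈ Finset.Icc 1 m, (z ^ 2 - ((j : ℂ) * h) ^ 2)) * y z)
      = ∑ k ∈ Finset.range (m+1),
          (((-1 : ℂ) ^ (m + 1) * (m.factorial : ℂ) ^ 2 * (h : ℂ) ^ (2 * m)) * (P k)⁻¹)
            * RInt ((m : ℝ) * h + ρ) ρ (fun z => y z * (z ^ 2 - ((k : ℂ) * h) ^ 2)⁻¹) := by
    rw [RInt_congr hA0.le hρ.le hKy, RInt_sum hA0.le hρ.le _ _ hcont]
    exact Finset.sum_congr rfl (fun k _ => RInt_const_mul _ _)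
  have step0 : RInt ((m : ℝ) * h + ρ) ρ
      (fun z => y z * (z ^ 2 - (((0:ℕ) : ℂ) * h) ^ 2)⁻¹) = 2 * Real.pi * I * deriv y 0 := by
    rw [RInt_congr hA0.le hρ.le (g := fun z => y z * (z ^ 2)⁻¹) (fun z _ => by norm_num)]
    exact RInt_cauchy_deriv hy hA0 hρ hρ'
  have stepk : ∀ k ∈ Finset.Icc 1 m, RInt ((m : ℝ) * h + ρ) ρ
      (fun z => y z * (z ^ 2 - ((k : ℂ) * h) ^ 2)⁻¹)
      = (2 * (k : ℂ) * h)⁻¹ *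
          (2 * Real.pi * I * y ((k : ℂ) * h) - 2 * Real.pi * I * y (-((k : ℂ) * h))) := by
    intro k hk
    obtain ⟨hk1, hk2⟩ := Finset.mem_Icc.1 hk
    have hkh : |(k : ℝ) * h| < (m : ℝ) * h + ρ := hjh k hk2
    have hkhneg : |(-((k : ℝ) * h))| < (m : ℝ) * h + ρ := by rwa [abs_neg]
    have h2kh : (2 * (k : ℂ) * h) ≠ 0 := by
      apply mul_ne_zero (mul_ne_zero two_ne_zero (Nat.cast_ne_zero.2 (by omega)))
      exact Complex.ofReal_ne_zero.2 hh.ne'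
    have hcongr : ∀ z ∈ Edges ((m : ℝ) * h + ρ) ρ,
        y z * (z ^ 2 - ((k : ℂ) * h) ^ 2)⁻¹
          = (2 * (k : ℂ) * h)⁻¹ * (y z * (z - (((k : ℝ) * h : ℝ) : ℂ))⁻¹)
            + (-(2 * (k : ℂ) * h)⁻¹) * (y z * (z - ((-((k : ℝ) * h) : ℝ) : ℂ))⁻¹) := by
      intro z hz
      have h1 : z - (((k : ℝ) * h : ℝ) : ℂ) ≠ 0 := edges_sub_ne hkh hρ hz
      have h2 : z - ((-((k : ℝ) * h) : ℝ) : ℂ) ≠ 0 := edges_sub_ne hkhneg hρ hz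
      have h3 : z ^ 2 - ((k : ℂ) * h) ^ 2 ≠ 0 := by
        have hne' := edges_sq_sub_ne (p := (k : ℝ) * h) hkh hρ hz
        intro hEq
        apply hne'
        push_cast
        push_cast at hEq
        linear_combination hEq
      push_cast at h1 h2 ⊢
      rw [show (z - -((k:ℂ)*(h:ℂ))) = z + (k:ℂ)*h by ring] at h2 ⊢
      have hfac : z^2 - ((k:ℂ)*(h:ℂ))^2 = (z - (k:ℂ)*h)*(z + (k:ℂ)*h) := by ring
      rw [hfac]
      field_simp [h1, h2, h2kh, (Nat.cast_ne_zero.2 (by omega : k ≠ 0) : (k:ℂ) ≠ 0), Complex.ofReal_ne_zero.2 hh.ne']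
      ring
    rw [RInt_congr hA0.le hρ.le hcongr,
      RInt_add hA0.le hρ.le
        (continuousOn_const.fun_mul ((continuousOn_y_edges hy hρ').fun_mul
          (continuousOn_inv_sub_edges hkh hρ)))
        (continuousOn_const.fun_mul ((continuousOn_y_edges hy hρ').fun_mul
          (continuousOn_inv_sub_edges hkhneg hρ))),
      RInt_const_mul, RInt_const_mul,
      RInt_cauchy hy hkh hρ hρ', RInt_cauchy hy hkhneg hρ hρ']
    push_cast
    ring
  -- assemble
  have hπ : (2 * (Real.pi : ℂ) * I) ≠ 0 := by
    simp [Real.pi_ne_zero, Complex.I_ne_zero]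
  have hc0 : ((-1 : ℂ) ^ (m + 1) * (m.factorial : ℂ) ^ 2 * (h : ℂ) ^ (2 * m)) * (P 0)⁻¹ = -1 := by
    have hP0 : P 0 = (-1) ^ m * (m.factorial : ℂ) ^ 2 * (h : ℂ) ^ (2*m) := by
      rw [hPdef]
      exact prod_P_zero m h
    rw [hP0]
    exact coeff_zero m hh.ne'
  have hck : ∀ k ∈ Finset.Icc 1 m,
      ((-1 : ℂ) ^ (m + 1) * (m.factorial : ℂ) ^ 2 * (h : ℂ) ^ (2 * m)) * (P k)⁻¹
        * (2 * (k : ℂ) * h)⁻¹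
      = ((-1 : ℂ) ^ (k + 1) * (m.factorial : ℂ) ^ 2) /
          ((k : ℂ) * h * ((m - k).factorial : ℂ) * ((m + k).factorial : ℂ)) := by
    intro k hk
    obtain ⟨hk1, hk2⟩ := Finset.mem_Icc.1 hk
    have hPk : P k = (-1) ^ (m-k) * ((m-k).factorial : ℂ) * ((m+k).factorial : ℂ) / 2
        * (h : ℂ) ^ (2*m) := by
      rw [hPdef]
      exact prod_P_pos m k hk1 hk2 h
    rw [hPk]
    exact coeff_pos m k hk1 hk2 hh
  have htotal : RInt ((m : ℝ) * h + ρ) ρ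
      (fun z => ((-1 : ℂ) ^ (m + 1) * (m.factorial : ℂ) ^ 2 * (h : ℂ) ^ (2 * m)) /
          (z ^ 2 * ∏ j ∈ Finset.Icc 1 m, (z ^ 2 - ((j : ℂ) * h) ^ 2)) * y z)
      = (2 * Real.pi * I) *
        ((∑ j ∈ Finset.Icc 1 m,
          ((-1 : ℂ) ^ (j + 1) * (m.factorial : ℂ) ^ 2) /
              ((j : ℂ) * h * ((m - j).factorial : ℂ) * ((m + j).factorial : ℂ)) *
            (y ((j : ℂ) * h) - y (-((j : ℂ) * h)))) - deriv y 0) := by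
    calc RInt ((m : ℝ) * h + ρ) ρ _
        = ∑ k ∈ Finset.range (m+1),
            (((-1 : ℂ) ^ (m + 1) * (m.factorial : ℂ) ^ 2 * (h : ℂ) ^ (2 * m)) * (P k)⁻¹)
              * RInt ((m : ℝ) * h + ρ) ρ (fun z => y z * (z ^ 2 - ((k : ℂ) * h) ^ 2)⁻¹) := step1
      _ = (((-1 : ℂ) ^ (m + 1) * (m.factorial : ℂ) ^ 2 * (h : ℂ) ^ (2 * m)) * (P 0)⁻¹)
              * RInt ((m : ℝ) * h + ρ) ρ (fun z => y z * (z ^ 2 - (((0:ℕ) : ℂ) * h) ^ 2)⁻¹)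
          + ∑ k ∈ Finset.Icc 1 m,
            (((-1 : ℂ) ^ (m + 1) * (m.factorial : ℂ) ^ 2 * (h : ℂ) ^ (2 * m)) * (P k)⁻¹)
              * RInt ((m : ℝ) * h + ρ) ρ (fun z => y z * (z ^ 2 - ((k : ℂ) * h) ^ 2)⁻¹) := by
          rw [range_succ_eq_insert_Icc, Finset.sum_insert (by simp)]
      _ = (-1) * (2 * Real.pi * I * deriv y 0)
          + ∑ k ∈ Finset.Icc 1 m, (2 * Real.pi * I) *
              (((-1 : ℂ) ^ (k + 1) * (m.factorial : ℂ) ^ 2) /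
                ((k : ℂ) * h * ((m - k).factorial : ℂ) * ((m + k).factorial : ℂ))
                * (y ((k : ℂ) * h) - y (-((k : ℂ) * h)))) := by
          rw [step0, hc0]
          congr 1
          apply Finset.sum_congr rfl
          intro k hk
          rw [stepk k hk, ← hck k hk]
          ring
      _ = _ := by
          rw [← Finset.mul_sum]
          ring
  rw [htotal, one_div, inv_mul_cancel_left₀ hπ]
end

section
/- Let Δ_k : [0, T] → ℝ≥0 satisfy Δ₁(t) = tM and Δ_{k+1}(t) ≤ ∫₀^t (M/(η(r − sM))) Δ_k(s) ds for all k ≥ 1, where T < r/M and 0 < η < 1. Then Δ_k(t) → 0 as k → ∞, uniformly in t ∈ [0, T]. -/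
open intervalIntegral

/-- Convergence of the Picard iteration differences: if `Δ₁(t) = tM` and
`Δ_{k+1}(t) ≤ ∫₀^t (M/(η(r − sM))) Δ_k(s) ds`, with `T < r/M`, then
`Δ_k → 0` uniformly on `[0, T]`. -/
theorem picard_differences_tend_to_zero
    (M r η T : ℝ) (hM : 0 < M) (hr : 0 < r) (hη₀ : 0 < η) (hη₁ : η < 1)
    (hT₀ : 0 ≤ T) (hT : T < r / M)
    (Δ : ℕ → ℝ → ℝ)
    (hnonneg : ∀ k, ∀ t ∈ Set.Icc (0 : ℝ) T, 0 ≤ Δ k t)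
    (hcont : ∀ k, ContinuousOn (Δ k) (Set.Icc (0 : ℝ) T))
    (hΔ1 : ∀ t ∈ Set.Icc (0 : ℝ) T, Δ 1 t = t * M)
    (hrec : ∀ k, 1 ≤ k → ∀ t ∈ Set.Icc (0 : ℝ) T,
      Δ (k + 1) t ≤ ∫ s in (0 : ℝ)..t, M / (η * (r - s * M)) * Δ k s) :
    TendstoUniformlyOn (fun k t => Δ k t) 0 Filter.atTop (Set.Icc (0 : ℝ) T) := by
  have hTM : T * M < r := (lt_div_iff₀ hM).mp hT
  set K : ℝ := M / (η * (r - T * M)) with hK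
  have hden : ∀ s ∈ Set.Icc (0 : ℝ) T, 0 < η * (r - s * M) := by
    intro s hs
    have h1 : s * M ≤ T * M := mul_le_mul_of_nonneg_right hs.2 hM.le
    have : 0 < r - s * M := by linarith
    positivity
  have hKpos : 0 < K := by
    have : 0 < η * (r - T * M) := by
      have : 0 < r - T * M := by linarith
      positivity
    exact div_pos hM this
  have hker_le : ∀ s ∈ Set.Icc (0 : ℝ) T, M / (η * (r - s * M)) ≤ K := by
    intro s hs
    have h1 : s * M ≤ T * M := mul_le_mul_of_nonneg_right hs.2 hM.le
    have hb : 0 < η * (r - T * M) := by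
      have : 0 < r - T * M := by linarith
      positivity
    exact div_le_div_of_nonneg_left hM.le hb (by nlinarith)
  have hker_cont : ContinuousOn (fun s => M / (η * (r - s * M))) (Set.Icc (0 : ℝ) T) := by
    apply ContinuousOn.div continuousOn_const
    · fun_prop
    · intro s hs; exact (hden s hs).ne'
  -- key bound by induction
  have key : ∀ k, ∀ t ∈ Set.Icc (0 : ℝ) T,
      Δ (k + 1) t ≤ T * M * K ^ k * t ^ k / (k.factorial : ℝ) := by
    intro k
    induction k with
    | zero =>
      intro t ht
      rw [hΔ1 t ht]
      simp only [pow_zero, Nat.factorial_zero, Nat.cast_one, mul_one, div_one]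
      exact mul_le_mul_of_nonneg_right ht.2 hM.le
    | succ k ih =>
      intro t ht
      have hsub : Set.Icc (0 : ℝ) t ⊆ Set.Icc (0 : ℝ) T :=
        Set.Icc_subset_Icc le_rfl ht.2
      have huIcc : Set.uIcc (0 : ℝ) t = Set.Icc 0 t := Set.uIcc_of_le ht.1
      have hint1 : IntervalIntegrable
          (fun s => M / (η * (r - s * M)) * Δ (k + 1) s) MeasureTheory.volume 0 t := by
        apply ContinuousOn.intervalIntegrable
        rw [huIcc]
        exact ((hker_cont.mono hsub).mul ((hcont (k + 1)).mono hsub))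
      have hint2 : IntervalIntegrable
          (fun s => K * (T * M * K ^ k * s ^ k / (k.factorial : ℝ))) MeasureTheory.volume 0 t :=
        (Continuous.intervalIntegrable (by continuity) 0 t)
      have h2 : (∫ s in (0 : ℝ)..t, M / (η * (r - s * M)) * Δ (k + 1) s) ≤
          ∫ s in (0 : ℝ)..t, K * (T * M * K ^ k * s ^ k / (k.factorial : ℝ)) := by
        apply intervalIntegral.integral_mono_on ht.1 hint1 hint2
        intro s hs
        have hsT : s ∈ Set.Icc (0 : ℝ) T := hsub hs
        have hΔle := ih s hsT
        have hΔ0 := hnonneg (k + 1) s hsT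
        have hk := hker_le s hsT
        have hkpos := (hden s hsT)
        have h0 : 0 ≤ M / (η * (r - s * M)) := div_nonneg hM.le hkpos.le
        calc M / (η * (r - s * M)) * Δ (k + 1) s ≤ K * Δ (k + 1) s :=
              mul_le_mul_of_nonneg_right hk hΔ0
          _ ≤ K * (T * M * K ^ k * s ^ k / (k.factorial : ℝ)) :=
              mul_le_mul_of_nonneg_left hΔle hKpos.le
      have h3 : (∫ s in (0 : ℝ)..t, K * (T * M * K ^ k * s ^ k / (k.factorial : ℝ))) =
          T * M * K ^ (k + 1) * t ^ (k + 1) / ((k + 1).factorial : ℝ) := by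
        rw [intervalIntegral.integral_const_mul]
        have : (∫ s in (0 : ℝ)..t, T * M * K ^ k * s ^ k / (k.factorial : ℝ)) =
            (T * M * K ^ k / (k.factorial : ℝ)) * ∫ s in (0 : ℝ)..t, s ^ k := by
          rw [← intervalIntegral.integral_const_mul]
          congr 1; ext s; ring
        rw [this, integral_pow]
        have hfac : ((k + 1).factorial : ℝ) = (k + 1 : ℝ) * (k.factorial : ℝ) := by
          rw [Nat.factorial_succ]; push_cast; ring
        have hfk : (k.factorial : ℝ) ≠ 0 := Nat.cast_ne_zero.mpr k.factorial_ne_zero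
        have hk1 : (k + 1 : ℝ) ≠ 0 := by positivity
        rw [hfac]
        field_simp [hfac]
        ring
      calc Δ (k + 1 + 1) t ≤ _ := hrec (k + 1) (Nat.le_add_left 1 k) t ht
        _ ≤ _ := h2
        _ = _ := h3
  -- convergence of the bound
  have hb : Filter.Tendsto (fun k : ℕ => T * M * (K * T) ^ k / (k.factorial : ℝ))
      Filter.atTop (nhds 0) := by
    have := (FloorSemiring.tendsto_pow_div_factorial_atTop (K * T)).const_mul (T * M)
    simpa [mul_div_assoc] using this
  rw [Metric.tendstoUniformlyOn_iff]
  intro ε hε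
  have := hb.eventually (gt_mem_nhds hε)
  rw [Filter.eventually_atTop] at this
  obtain ⟨N, hN⟩ := this
  rw [Filter.eventually_atTop]
  refine ⟨N + 1, fun n hn t ht => ?_⟩
  obtain ⟨m, rfl⟩ : ∃ m, n = m + 1 := ⟨n - 1, by omega⟩
  have hmN : N ≤ m := by omega
  have h1 := key m t ht
  have h2 : T * M * K ^ m * t ^ m / (m.factorial : ℝ) ≤
      T * M * (K * T) ^ m / (m.factorial : ℝ) := by
    gcongr ?_ / _
    have : t ^ m ≤ T ^ m := pow_le_pow_left₀ ht.1 ht.2 m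
    have h0 : 0 ≤ T * M * K ^ m := by positivity
    calc T * M * K ^ m * t ^ m ≤ T * M * K ^ m * T ^ m :=
          mul_le_mul_of_nonneg_left this h0
      _ = T * M * (K * T) ^ m := by rw [mul_pow]; ring
  have h3 := hN m hmN
  have h0 := hnonneg (m + 1) t ht
  have : dist ((0 : ℝ → ℝ) t) (Δ (m + 1) t) = Δ (m + 1) t := by
    simp [Real.dist_eq, abs_of_nonneg h0]
  rw [this]
  linarith
end
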